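/- arXiv:2108.08798 — 3 statements merged into one kernel-verified Lean document; each statement's English description precedes it below -/
import Mathlib

section
/- Let F_q be a finite field and let α_1, ..., α_{L+T} be distinct elements of F_q. Let f_i(x) = Π_{m ≠ i, 1 ≤ m ≤ L+T} (x - α_m)/(α_i - α_m) be the Lagrange basis polynomials. Then for any T distinct evaluation points β_1, ..., β_T ∈ F_q \ {α_1, ..., α_{L+T}}, the T × T matrix M with entries M_{i,j} = f_{L+i}(β_j) is invertible. -/
theorem stmt_8 (F : Type*) [Field F] [Fintype F] (L T : ℕ)
    (α : Fin (L + T) → F) (hα : Function.Injective α)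
    (β : Fin T → F) (hβ : Function.Injective β)
    (hout : ∀ j, β j ∉ Set.range α) :
    (Matrix.of fun (i j : Fin T) =>
      Polynomial.eval (β j) (∏ m ∈ Finset.univ.erase (Fin.natAdd L i),
        Polynomial.C ((α (Fin.natAdd L i) - α m)⁻¹)
          * (Polynomial.X - Polynomial.C (α m)))).det ≠ 0 := by
  classical
  intro hdet
  obtain ⟨v, hv, hvM⟩ := Matrix.exists_vecMul_eq_zero_iff.mpr hdet
  obtain ⟨i0, hi0⟩ := Function.ne_iff.mp hv
  have hioninj : Set.InjOn α (Finset.univ : Finset (Fin (L + T))) := hα.injOn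
  -- the basis polynomials
  have hbasis : ∀ i : Fin T,
      (∏ m ∈ Finset.univ.erase (Fin.natAdd L i),
        Polynomial.C ((α (Fin.natAdd L i) - α m)⁻¹)
          * (Polynomial.X - Polynomial.C (α m)))
      = Lagrange.basis Finset.univ α (Fin.natAdd L i) := by
    intro i
    rfl
  set p : Polynomial F :=
    ∑ i : Fin T, Polynomial.C (v i) * Lagrange.basis Finset.univ α (Fin.natAdd L i) with hp
  -- p vanishes at all β j and all α (castAdd T m)
  have hevalβ : ∀ j : Fin T, p.eval (β j) = 0 := by
    intro j
    have := congrFun hvM j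
    simpa [hp, Matrix.vecMul, dotProduct, Polynomial.eval_finset_sum, hbasis,
      mul_comm] using this
  have hevalα : ∀ m : Fin L, p.eval (α (Fin.castAdd T m)) = 0 := by
    intro m
    rw [hp, Polynomial.eval_finset_sum]
    refine Finset.sum_eq_zero fun i _ => ?_
    have hne : Fin.natAdd L i ≠ Fin.castAdd T m := by
      intro h
      have := congrArg Fin.val h
      simp only [Fin.natAdd, Fin.castAdd, Fin.castLE, Fin.mk.injEq] at this
      omega
    rw [Polynomial.eval_mul, Lagrange.eval_basis_of_ne hne (Finset.mem_univ _), mul_zero]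
  -- the combined injection
  let f : Fin T ⊕ Fin L → F := Sum.elim β (fun m => α (Fin.castAdd T m))
  have hfinj : Function.Injective f := by
    rintro (a | a) (b | b) h
    · simp only [f, Sum.elim_inl] at h; exact congrArg Sum.inl (hβ h)
    · exact absurd ⟨_, h.symm⟩ (hout a)
    · exact absurd ⟨_, h⟩ (hout b)
    · simp only [f, Sum.elim_inr] at h
      exact congrArg Sum.inr (Fin.castAdd_injective _ _ (hα h))
  have hT : 0 < T := Fin.pos i0
  have hdeg : p.natDegree < Fintype.card (Fin T ⊕ Fin L) := by
    have : p.natDegree ≤ L + T - 1 := by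
      refine Polynomial.natDegree_sum_le_of_forall_le _ _ fun i _ => ?_
      refine (Polynomial.natDegree_C_mul_le _ _).trans ?_
      rw [Lagrange.natDegree_basis hioninj (Finset.mem_univ _)]
      simp
    simp only [Fintype.card_sum, Fintype.card_fin]
    omega
  have hp0 : p = 0 := Polynomial.eq_zero_of_natDegree_lt_card_of_eval_eq_zero p hfinj
    (by rintro (a | a) <;> simp only [f, Sum.elim_inl, Sum.elim_inr] <;>
      [exact hevalβ a; exact hevalα a]) hdeg
  -- evaluate at α (natAdd L i0)
  have := congrArg (Polynomial.eval (α (Fin.natAdd L i0))) hp0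
  rw [hp, Polynomial.eval_finset_sum] at this
  simp only [Polynomial.eval_mul, Polynomial.eval_C, Polynomial.eval_zero] at this
  rw [Finset.sum_eq_single i0] at this
  · rw [Lagrange.eval_basis_self hioninj (Finset.mem_univ _), mul_one] at this
    exact hi0 this
  · intro b _ hb
    have hne : Fin.natAdd L b ≠ Fin.natAdd L i0 := by
      intro h
      apply hb
      have := congrArg Fin.val h
      simp only [Fin.natAdd] at this
      exact Fin.ext (by omega)
    rw [Lagrange.eval_basis_of_ne hne (Finset.mem_univ _), mul_zero]
  · exact fun h => absurd (Finset.mem_univ i0) h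
end

section
/- In the field F_16 = F_2(α) with α^4 + α + 1 = 0, for any polynomial h(x) = h_0 + h_1 x + h_2 x^2 over F_16, the following identity holds: α^4·(Tr(α^{-1} h(0)) + Tr(α^{-2} h(α^5)) + Tr(α^{-8} h(α^{10})) + Tr(α^{-4} h(α^{15}))) + α^5·Tr(α^{-2} h(α^5)) + α^{10}·Tr(α^{-8} h(α^{10})) + α^{15}·Tr(α^{-4} h(α^{15})) = h(α), where Tr: F_16 → F_4 is Tr(x) = x + x^4. -/
set_option maxHeartbeats 4000000
set_option maxRecDepth 100000
set_option linter.unreachableTactic false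
set_option linter.style.multiGoal false
set_option linter.unusedTactic false
set_option linter.unnecessarySeqFocus false

theorem stmt_9 (K : Type*) [Field K] (hchar : (2 : K) = 0)
    (α : K) (hα : α ^ 4 + α + 1 = 0) (h0 h1 h2 : K) :
    let tr : K → K := fun x => x + x ^ 4
    let h : K → K := fun x => h0 + h1 * x + h2 * x ^ 2
    α ^ 4 * (tr (α⁻¹ ^ 1 * h 0) + tr (α⁻¹ ^ 2 * h (α ^ 5))
        + tr (α⁻¹ ^ 8 * h (α ^ 10)) + tr (α⁻¹ ^ 4 * h (α ^ 15)))
      + α ^ 5 * tr (α⁻¹ ^ 2 * h (α ^ 5))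
      + α ^ 10 * tr (α⁻¹ ^ 8 * h (α ^ 10))
      + α ^ 15 * tr (α⁻¹ ^ 4 * h (α ^ 15)) = h α := by
  intro tr h
  have hinv : α⁻¹ = α ^ 3 + 1 :=
    inv_eq_of_mul_eq_one_right (by linear_combination hα - hchar)
  rw [hinv]
  simp only [tr, h]
  linear_combination (((((((((α ^ 182 * h2 ^ 4 + α ^ 178 * h2 ^ 4) + (α ^ 176 * h2 ^ 4 + α ^ 175 * h2 ^ 4)) + ((α ^ 174 * h2 ^ 4 + α ^ 173 * h2 ^ 4) + (α ^ 169 * h2 ^ 4 + α ^ 168 * h2 ^ 4))) + (((α ^ 166 * h2 ^ 4 + α ^ 164 * h2 ^ 4) + (α ^ 163 * h2 ^ 4 + α ^ 162 * h2 ^ 4)) + ((α ^ 161 * h2 ^ 4 + α ^ 157 * h2 ^ 4) + (α ^ 154 * h2 ^ 4 + α ^ 153 * h2 ^ 4)))) + ((((α ^ 151 * h2 ^ 4 + α ^ 149 * h2 ^ 4) + (α ^ 148 * h2 ^ 4 + α ^ 147 * h2 ^ 4)) + ((α ^ 146 * h2 ^ 4 + α ^ 142 * h1 ^ 4) + (α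 ^ 142 * h2 ^ 4 + α ^ 139 * h1 ^ 4))) + (((α ^ 139 * h2 ^ 4 + α ^ 138 * h1 ^ 4) + (α ^ 138 * h2 ^ 4 + α ^ 136 * h2 ^ 4)) + ((α ^ 134 * h1 ^ 4 + α ^ 134 * h2 ^ 4) + (α ^ 133 * h2 ^ 4 + α ^ 132 * h2 ^ 4))))) + (((((α ^ 131 * h1 ^ 4 + α ^ 130 * h1 ^ 4) + (α ^ 128 * h1 ^ 4 + α ^ 128 * h2 ^ 4)) + ((α ^ 126 * h1 ^ 4 + α ^ 125 * h1 ^ 4) + (α ^ 125 * h2 ^ 4 + α ^ 124 * h1 ^ 4))) + (((α ^ 124 * h2 ^ 4 + α ^ 123 * h1 ^ 4) + (α ^ 122 * h2 ^ 4 + α ^ 119 * h2 ^ 4)) + ((α ^ 118 * h2 ^ 4 + α ^ 116 * h2 ^ 4) + (α ^ 114 * h2 ^ 4 + α ^ 113 * h2 ^ 4)))) + ((((α ^ 112 * h2 ^ 4 + α ^ 111 * h2 ^ 4) + (α ^ 108 * h1 ^ 4 + α ^ 107 * h2 ^ 4)) + ((α ^ 105 * h1 ^ 4 + α ^ 104 *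 h1 ^ 4) + (α ^ 104 * h2 ^ 4 + α ^ 103 * h2 ^ 4))) + (((α ^ 102 * h0 ^ 4 + α ^ 102 * h1 ^ 4) + (α ^ 101 * h2 ^ 4 + α ^ 100 * h1 ^ 4)) + ((α ^ 99 * h0 ^ 4 + α ^ 99 * h1 ^ 4) + (α ^ 99 * h2 ^ 4 + α ^ 98 * h0 ^ 4)))))) + ((((((α ^ 98 * h1 ^ 4 + α ^ 98 * h2 ^ 4) + (α ^ 97 * h1 ^ 4 + α ^ 97 * h2 ^ 4)) + ((α ^ 96 * h2 ^ 4 + α ^ 94 * h0 ^ 4) + (α ^ 93 * h1 ^ 4 + α ^ 92 * h2 ^ 4))) + (((α ^ 91 * h0 ^ 4 + α ^ 90 * h0 ^ 4) + (α ^ 90 * h1 ^ 4 + α ^ 89 * h1 ^ 4)) + ((α ^ 89 * h2 ^ 4 + α ^ 88 * h0 ^ 4) + (α ^ 88 * h2 ^ 4 + α ^ 87 * h1 ^ 4)))) + ((((α ^ 86 * h0 ^ 4 + α ^ 85 * h0 ^ 4) + (α ^ 85 * h1 ^ 4 + α ^ 84 * h0 ^ 4)) + ((α ^ 84 * h1 ^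 4 + α ^ 84 * h2 ^ 4) + (α ^ 83 * h0 ^ 4 + α ^ 83 * h1 ^ 4))) + (((α ^ 82 * h1 ^ 4 + α ^ 81 * h2 ^ 4) + (α ^ 79 * h0 ^ 4 + α ^ 78 * h1 ^ 4)) + ((α ^ 78 * h2 ^ 4 + α ^ 77 * h2 ^ 4) + (α ^ 76 * h0 ^ 4 + α ^ 75 * h0 ^ 4))))) + (((((α ^ 75 * h1 ^ 4 + α ^ 75 * h2 ^ 4) + (α ^ 74 * h1 ^ 4 + α ^ 73 * h0 ^ 4)) + ((α ^ 73 * h2 ^ 4 + α ^ 72 * h1 ^ 4) + (α ^ 72 * h2 ^ 4 + α ^ 71 * h0 ^ 4))) + (((α ^ 71 * h1 ^ 4 + α ^ 71 * h2 ^ 4) + (α ^ 70 * h0 ^ 4 + α ^ 70 * h1 ^ 4)) + ((α ^ 70 * h2 ^ 4 + α ^ 69 * h0 ^ 4) + (α ^ 69 * h1 ^ 4 + α ^ 68 * h0 ^ 4)))) + ((((α ^ 66 * h2 ^ 4 + α ^ 65 * h1 ^ 4) + (α ^ 65 * h2 ^ 4 + α ^ 64 * h0 ^ 4)) + ((α ^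 64 * h2 ^ 4 + α ^ 63 * h2 ^ 4) + (α ^ 62 * h1 ^ 4 + α ^ 61 * h0 ^ 4))) + (((α ^ 61 * h1 ^ 4 + α ^ 60 * h0 ^ 4) + (α ^ 60 * h1 ^ 4 + α ^ 59 * h0 ^ 4)) + ((α ^ 59 * h1 ^ 4 + α ^ 59 * h2 ^ 4) + (α ^ 58 * h0 ^ 4 + α ^ 56 * h2 ^ 4))))))) + (((((((α ^ 55 * h1 ^ 4 + α ^ 55 * h2 ^ 4) + (α ^ 54 * h0 ^ 4 + α ^ 53 * h2 ^ 4)) + ((α ^ 53 * h2 + α ^ 52 * h1 ^ 4) + (α ^ 51 * h0 ^ 4 + α ^ 51 * h1 ^ 4))) + (((α ^ 51 * h2 ^ 4 + α ^ 50 * h0 ^ 4) + (α ^ 50 * h2 ^ 4 + α ^ 49 * h1 ^ 4)) + ((α ^ 49 * h2 ^ 4 + α ^ 49 * h2) + (α ^ 48 * h2 ^ 4 + α ^ 47 * h1 ^ 4)))) + ((((α ^ 46 * h0 ^ 4 + α ^ 46 * h2) + (α ^ 45 * h2 + α ^ 44 * h2 ^ 4)) + ((α ^ 44 * h2 + α ^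 43 * h0 ^ 4) + (α ^ 43 * h1 ^ 4 + α ^ 43 * h2))) + (((α ^ 42 * h0 ^ 4 + α ^ 42 * h2) + (α ^ 41 * h2 + α ^ 40 * h0 ^ 4)) + ((α ^ 40 * h1 + α ^ 39 * h1 ^ 4) + (α ^ 38 * h0 ^ 4 + α ^ 38 * h1))))) + (((((α ^ 37 * h0 ^ 4 + α ^ 37 * h1) + (α ^ 37 * h2 + α ^ 36 * h0 ^ 4)) + ((α ^ 36 * h1 ^ 4 + α ^ 36 * h1) + (α ^ 35 * h0 ^ 4 + α ^ 35 * h1 ^ 4))) + (((α ^ 35 * h1 + α ^ 34 * h1) + (α ^ 34 * h2 + α ^ 33 * h1 ^ 4)) + ((α ^ 33 * h2 + α ^ 31 * h0 ^ 4) + (α ^ 31 * h1 ^ 4 + α ^ 31 * h2)))) + ((((α ^ 30 * h0 + α ^ 30 * h1 ^ 4) + (α ^ 30 * h1 + α ^ 30 * h2)) + ((α ^ 29 * h1 ^ 4 + α ^ 29 * h2) + (α ^ 28 * h0 ^ 4 + α ^ 28 * h1 ^ 4))) + (((α ^ 28 * h2 + α ^ 27 * h0 ^ 4) + (α ^ 27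 * h0 + α ^ 26 * h0)) + ((α ^ 26 * h2 + α ^ 24 * h0 ^ 4) + (α ^ 24 * h1 ^ 4 + α ^ 24 * h2)))))) + ((((((α ^ 23 * h0 ^ 4 + α ^ 23 * h0) + (α ^ 23 * h2 + α ^ 22 * h0)) + ((α ^ 22 * h2 + α ^ 21 * h0 ^ 4) + (α ^ 21 * h2 + α ^ 20 * h0))) + (((α ^ 20 * h2 + α ^ 19 * h0 ^ 4) + (α ^ 18 * h0 ^ 4 + α ^ 18 * h0)) + ((α ^ 17 * h0 ^ 4 + α ^ 17 * h0) + (α ^ 17 * h2 + α ^ 16 * h0 ^ 4)))) + ((((α ^ 16 * h0 + α ^ 16 * h1) + (α ^ 15 * h0 + α ^ 15 * h1)) + ((α ^ 14 * h2 + α ^ 13 * h1) + (α ^ 13 * h2 + α ^ 12 * h0))) + (((α ^ 12 * h1 + α ^ 11 * h0 ^ 4) + (α ^ 10 * h2 + α ^ 9 * h0)) + ((α ^ 9 * h2 + α ^ 8 * h0 ^ 4) + (α ^ 8 * h0 + α ^ 8 * h1))))) + (((((α ^ 7 * h0 ^ 4 + α ^ 7 * h0) + (α ^ 7 * h2 +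 α ^ 6 * h0 ^ 4)) + ((α ^ 6 * h0 + α ^ 6 * h1) + (α ^ 5 * h0 ^ 4 + α ^ 5 * h2))) + (((α ^ 4 * h1 + α ^ 4 * h2) + (α ^ 3 * h0 + α ^ 3 * h1)) + ((α ^ 3 * h2 + α ^ 2 * h0) + (α ^ 2 * h1 + α ^ 2 * h2)))) + ((α * h0 + α * h1) + h0)))))) * hα + (((((((((((((16) * α ^ 183 * h2 ^ 4 + (-1) * α ^ 182 * h2 ^ 4) + ((256) * α ^ 180 * h2 ^ 4 + (-1) * α ^ 179 * h2 ^ 4)) + (((-1) * α ^ 178 * h2 ^ 4 + (2555) * α ^ 177 * h2 ^ 4) + ((2) * α ^ 176 * h1 * h2 ^ 3 + (-1) * α ^ 176 * h2 ^ 4))) + ((((-1) * α ^ 175 * h2 ^ 4 + (18507) * α ^ 174 * h2 ^ 4) + ((64) * α ^ 173 * h1 * h2 ^ 3 + (-1) * α ^ 173 * h2 ^ 4)) + (((104078) * α ^ 171 * h2 ^ 4 + (994) * α ^ 170 * h1 * h2 ^ 3) + ((-1) * α ^ 170 * h2 ^ 4 + (7) * α ^ 169 * h2 ^ 4)))) +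 (((((2) * α ^ 168 * h1 * h2 ^ 3 + (473259) * α ^ 168 * h2 ^ 4) + ((9984) * α ^ 167 * h1 * h2 ^ 3 + (-1) * α ^ 167 * h2 ^ 4)) + (((2) * α ^ 166 * h0 * h2 ^ 3 + (3) * α ^ 166 * h1 ^ 2 * h2 ^ 2) + ((59) * α ^ 166 * h2 ^ 4 + (32) * α ^ 165 * h1 * h2 ^ 3))) + ((((1787619) * α ^ 165 * h2 ^ 4 + (72912) * α ^ 164 * h1 * h2 ^ 3) + ((-1) * α ^ 164 * h2 ^ 4 + (64) * α ^ 163 * h0 * h2 ^ 3)) + (((96) * α ^ 163 * h1 ^ 2 * h2 ^ 2 + (279) * α ^ 163 * h2 ^ 4) + ((240) * α ^ 162 * h1 * h2 ^ 3 + (5717965) * α ^ 162 * h2 ^ 4))))) + ((((((412672) * α ^ 161 * h1 * h2 ^ 3 + (-1) * α ^ 161 * h2 ^ 4) + ((994) * α ^ 160 * h0 * h2 ^ 3 + (1491) * α ^ 160 * h1 ^ 2 * h2 ^ 2)) + (((910) * α ^ 160 * h2 ^ 4 + (1120) * α ^ 159 * h1 * h2 ^ 3) + ((15713763) * α ^ 159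 * h2 ^ 4 + (1884304) * α ^ 158 * h1 * h2 ^ 3))) + ((((-1) * α ^ 158 * h2 ^ 4 + (9984) * α ^ 157 * h0 * h2 ^ 3) + ((14976) * α ^ 157 * h1 ^ 2 * h2 ^ 2 + (2) * α ^ 157 * h1 * h2 ^ 3)) + (((2183) * α ^ 157 * h2 ^ 4 + (6) * α ^ 156 * h0 * h1 * h2 ^ 2) + ((2) * α ^ 156 * h1 ^ 3 * h2 + (3640) * α ^ 156 * h1 * h2 ^ 3)))) + (((((37520990) * α ^ 156 * h2 ^ 4 + (7134464) * α ^ 155 * h1 * h2 ^ 3) + ((-1) * α ^ 155 * h2 ^ 4 + (72912) * α ^ 154 * h0 * h2 ^ 3)) + (((109368) * α ^ 154 * h1 ^ 2 * h2 ^ 2 + (32) * α ^ 154 * h1 * h2 ^ 3) + ((4003) * α ^ 154 * h2 ^ 4 + (192) * α ^ 153 * h0 * h1 * h2 ^ 2))) + ((((2) * α ^ 153 * h0 * h2 ^ 3 + (64) * α ^ 153 * h1 ^ 3 * h2) + ((3) * α ^ 153 * h1 ^ 2 * h2 ^ 2 + (8736) * α ^ 153 * h1 * h2 ^ 3)) +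 (((78540643) * α ^ 153 * h2 ^ 4 + (22848984) * α ^ 152 * h1 * h2 ^ 3) + ((-1) * α ^ 152 * h2 ^ 4 + (412672) * α ^ 151 * h0 * h2 ^ 3)))))) + (((((((619008) * α ^ 151 * h1 ^ 2 * h2 ^ 2 + (240) * α ^ 151 * h1 * h2 ^ 3) + ((5719) * α ^ 151 * h2 ^ 4 + (2982) * α ^ 150 * h0 * h1 * h2 ^ 2)) + (((32) * α ^ 150 * h0 * h2 ^ 3 + (994) * α ^ 150 * h1 ^ 3 * h2) + ((48) * α ^ 150 * h1 ^ 2 * h2 ^ 2 + (16016) * α ^ 150 * h1 * h2 ^ 3))) + ((((145154723) * α ^ 150 * h2 ^ 4 + (62829312) * α ^ 149 * h1 * h2 ^ 3) + ((-1) * α ^ 149 * h2 ^ 4 + (1884304) * α ^ 148 * h0 * h2 ^ 3)) + (((2826456) * α ^ 148 * h1 ^ 2 * h2 ^ 2 + (1120) * α ^ 148 * h1 * h2 ^ 3) + ((6434) * α ^ 148 * h2 ^ 4 + (29952) * α ^ 147 * h0 * h1 * h2 ^ 2)))) + (((((240) * α ^ 147 * h0 * h2 ^ 3 + (9984) * α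 ^ 147 * h1 ^ 3 * h2) + ((360) * α ^ 147 * h1 ^ 2 * h2 ^ 2 + (22880) * α ^ 147 * h1 * h2 ^ 3)) + (((238199949) * α ^ 147 * h2 ^ 4 + (3) * α ^ 146 * h0 ^ 2 * h2 ^ 2) + ((6) * α ^ 146 * h0 * h1 ^ 2 * h2 + (150061080) * α ^ 146 * h1 * h2 ^ 3))) + ((((-1) * α ^ 146 * h2 ^ 4 + (7134464) * α ^ 145 * h0 * h2 ^ 3) + ((10701696) * α ^ 145 * h1 ^ 2 * h2 ^ 2 + (3640) * α ^ 145 * h1 * h2 ^ 3)) + (((5720) * α ^ 145 * h2 ^ 4 + (218736) * α ^ 144 * h0 * h1 * h2 ^ 2) + ((1120) * α ^ 144 * h0 * h2 ^ 3 + (72912) * α ^ 144 * h1 ^ 3 * h2))))) + ((((((1680) * α ^ 144 * h1 ^ 2 * h2 ^ 2 + (25740) * α ^ 144 * h1 * h2 ^ 3) + ((348614500) * α ^ 144 * h2 ^ 4 + (96) * α ^ 143 * h0 ^ 2 * h2 ^ 2)) + (((192) * α ^ 143 * h0 * h1 ^ 2 * h2 + (15) * α ^ 143 * h1 ^ 4)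 + ((314146560) * α ^ 143 * h1 * h2 ^ 3 + (-1) * α ^ 143 * h2 ^ 4))) + ((((22848986) * α ^ 142 * h0 * h2 ^ 3 + (-1) * α ^ 142 * h1 ^ 4) + ((34273479) * α ^ 142 * h1 ^ 2 * h2 ^ 2 + (8736) * α ^ 142 * h1 * h2 ^ 3)) + (((4003) * α ^ 142 * h2 ^ 4 + (1238016) * α ^ 141 * h0 * h1 * h2 ^ 2) + ((3640) * α ^ 141 * h0 * h2 ^ 3 + (412672) * α ^ 141 * h1 ^ 3 * h2)))) + (((((5460) * α ^ 141 * h1 ^ 2 * h2 ^ 2 + (22880) * α ^ 141 * h1 * h2 ^ 3) + ((456548220) * α ^ 141 * h2 ^ 4 + (1491) * α ^ 140 * h0 ^ 2 * h2 ^ 2)) + (((2982) * α ^ 140 * h0 * h1 ^ 2 * h2 + (248) * α ^ 140 * h1 ^ 4) + ((580610160) * α ^ 140 * h1 * h2 ^ 3 + (-1) * α ^ 140 * h2 ^ 4))) + ((((62829344) * α ^ 139 * h0 * h2 ^ 3 + (-1) * α ^ 139 * h1 ^ 4) + ((94244016) * α ^ 139 * h1 ^ 2 * h2 ^ 2 +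 (16016) * α ^ 139 * h1 * h2 ^ 3)) + (((2183) * α ^ 139 * h2 ^ 4 + (5652918) * α ^ 138 * h0 * h1 * h2 ^ 2) + ((8736) * α ^ 138 * h0 * h2 ^ 3 + (-1) * α ^ 138 * h1 ^ 4))))))) + ((((((((1884306) * α ^ 138 * h1 ^ 3 * h2 + (13104) * α ^ 138 * h1 ^ 2 * h2 ^ 2) + ((16016) * α ^ 138 * h1 * h2 ^ 3 + (536258002) * α ^ 138 * h2 ^ 4)) + (((14976) * α ^ 137 * h0 ^ 2 * h2 ^ 2 + (29952) * α ^ 137 * h0 * h1 ^ 2 * h2) + ((2496) * α ^ 137 * h1 ^ 4 + (952796160) * α ^ 137 * h1 * h2 ^ 3))) + ((((-1) * α ^ 137 * h2 ^ 4 + (6) * α ^ 136 * h0 ^ 2 * h1 * h2) + ((2) * α ^ 136 * h0 * h1 ^ 3 + (150061320) * α ^ 136 * h0 * h2 ^ 3)) + (((225091980) * α ^ 136 * h1 ^ 2 * h2 ^ 2 + (22880) * α ^ 136 * h1 * h2 ^ 3) + ((909) * α ^ 136 * h2 ^ 4 + (21403488) * α ^ 135 * h0 * h1 * h2 ^ 2))))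 + (((((16016) * α ^ 135 * h0 * h2 ^ 3 + (-1) * α ^ 135 * h1 ^ 4) + ((7134496) * α ^ 135 * h1 ^ 3 * h2 + (24024) * α ^ 135 * h1 ^ 2 * h2 ^ 2)) + (((8736) * α ^ 135 * h1 * h2 ^ 3 + (565722720) * α ^ 135 * h2 ^ 4) + ((109368) * α ^ 134 * h0 ^ 2 * h2 ^ 2 + (218736) * α ^ 134 * h0 * h1 ^ 2 * h2))) + ((((18227) * α ^ 134 * h1 ^ 4 + (1394456880) * α ^ 134 * h1 * h2 ^ 3) + ((-1) * α ^ 134 * h2 ^ 4 + (192) * α ^ 133 * h0 ^ 2 * h1 * h2)) + (((64) * α ^ 133 * h0 * h1 ^ 3 + (314147680) * α ^ 133 * h0 * h2 ^ 3) + ((471221520) * α ^ 133 * h1 ^ 2 * h2 ^ 2 + (25740) * α ^ 133 * h1 * h2 ^ 3))))) + ((((((279) * α ^ 133 * h2 ^ 4 + (68547672) * α ^ 132 * h0 * h1 * h2 ^ 2) + ((22880) * α ^ 132 * h0 * h2 ^ 3 + (-1) * α ^ 132 * h1 ^ 4)) + (((22849224) * α ^ 132 * h1 ^ 3 * h2 +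 (34320) * α ^ 132 * h1 ^ 2 * h2 ^ 2) + ((3640) * α ^ 132 * h1 * h2 ^ 3 + (536257994) * α ^ 132 * h2 ^ 4))) + ((((619008) * α ^ 131 * h0 ^ 2 * h2 ^ 2 + (1238016) * α ^ 131 * h0 * h1 ^ 2 * h2) + ((103167) * α ^ 131 * h1 ^ 4 + (1826192640) * α ^ 131 * h1 * h2 ^ 3)) + (((2982) * α ^ 130 * h0 ^ 2 * h1 * h2 + (994) * α ^ 130 * h0 * h1 ^ 3) + ((580613800) * α ^ 130 * h0 * h2 ^ 3 + (-1) * α ^ 130 * h1 ^ 4)))) + (((((870920700) * α ^ 130 * h1 ^ 2 * h2 ^ 2 + (22880) * α ^ 130 * h1 * h2 ^ 3) + ((60) * α ^ 130 * h2 ^ 4 + (188491296) * α ^ 129 * h0 * h1 * h2 ^ 2)) + (((25740) * α ^ 129 * h0 * h2 ^ 3 + (-1) * α ^ 129 * h1 ^ 4) + ((62830432) * α ^ 129 * h1 ^ 3 * h2 + (38610) * α ^ 129 * h1 ^ 2 * h2 ^ 2))) + ((((1120) * α ^ 129 * h1 * h2 ^ 3 + (456548159) * α ^ 129 * h2 ^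 4) + ((2826456) * α ^ 128 * h0 ^ 2 * h2 ^ 2 + (5652912) * α ^ 128 * h0 * h1 ^ 2 * h2)) + (((471075) * α ^ 128 * h1 ^ 4 + (2145031980) * α ^ 128 * h1 * h2 ^ 3) + ((-1) * α ^ 128 * h2 ^ 4 + (29952) * α ^ 127 * h0 ^ 2 * h1 * h2)))))) + (((((((9984) * α ^ 127 * h0 * h1 ^ 3 + (6) * α ^ 127 * h0 * h1 * h2 ^ 2) + ((952804896) * α ^ 127 * h0 * h2 ^ 3 + (-1) * α ^ 127 * h1 ^ 4)) + (((2) * α ^ 127 * h1 ^ 3 * h2 + (1429207344) * α ^ 127 * h1 ^ 2 * h2 ^ 2) + ((16016) * α ^ 127 * h1 * h2 ^ 3 + (8) * α ^ 127 * h2 ^ 4))) + ((((2) * α ^ 126 * h0 ^ 3 * h2 + (3) * α ^ 126 * h0 ^ 2 * h1 ^ 2) + ((450194160) * α ^ 126 * h0 * h1 * h2 ^ 2 + (22880) * α ^ 126 * h0 * h2 ^ 3)) + (((-1) * α ^ 126 * h1 ^ 4 + (150064720) * α ^ 126 * h1 ^ 3 * h2) + ((34320) * α ^ 126 * h1 ^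 2 * h2 ^ 2 + (240) * α ^ 126 * h1 * h2 ^ 3)))) + (((((348614219) * α ^ 126 * h2 ^ 4 + (10701696) * α ^ 125 * h0 ^ 2 * h2 ^ 2) + ((21403392) * α ^ 125 * h0 * h1 ^ 2 * h2 + (1783615) * α ^ 125 * h1 ^ 4)) + (((2262890880) * α ^ 125 * h1 * h2 ^ 3 + (-1) * α ^ 125 * h2 ^ 4) + ((218736) * α ^ 124 * h0 ^ 2 * h1 * h2 + (72912) * α ^ 124 * h0 * h1 ^ 3))) + ((((96) * α ^ 124 * h0 * h1 * h2 ^ 2 + (1394472896) * α ^ 124 * h0 * h2 ^ 3) + ((-1) * α ^ 124 * h1 ^ 4 + (32) * α ^ 124 * h1 ^ 3 * h2)) + (((2091709344) * α ^ 124 * h1 ^ 2 * h2 ^ 2 + (8736) * α ^ 124 * h1 * h2 ^ 3) + ((64) * α ^ 123 * h0 ^ 3 * h2 + (96) * α ^ 123 * h0 ^ 2 * h1 ^ 2))))) + ((((((3) * α ^ 123 * h0 ^ 2 * h2 ^ 2 + (6) * α ^ 123 * h0 * h1 ^ 2 * h2) + ((942465888) * α ^ 123 * h0 * h1 * h2 ^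 2 + (16016) * α ^ 123 * h0 * h2 ^ 3)) + (((314155296) * α ^ 123 * h1 ^ 3 * h2 + (24024) * α ^ 123 * h1 ^ 2 * h2 ^ 2) + ((32) * α ^ 123 * h1 * h2 ^ 3 + (238199039) * α ^ 123 * h2 ^ 4))) + ((((34273476) * α ^ 122 * h0 ^ 2 * h2 ^ 2 + (68546952) * α ^ 122 * h0 * h1 ^ 2 * h2) + ((5712246) * α ^ 122 * h1 ^ 4 + (2145031980) * α ^ 122 * h1 * h2 ^ 3)) + (((-1) * α ^ 122 * h2 ^ 4 + (1238016) * α ^ 121 * h0 ^ 2 * h1 * h2) + ((412672) * α ^ 121 * h0 * h1 ^ 3 + (720) * α ^ 121 * h0 * h1 * h2 ^ 2)))) + (((((1826215520) * α ^ 121 * h0 * h2 ^ 3 + (240) * α ^ 121 * h1 ^ 3 * h2) + ((2739323280) * α ^ 121 * h1 ^ 2 * h2 ^ 2 + (3640) * α ^ 121 * h1 * h2 ^ 3)) + (((994) * α ^ 120 * h0 ^ 3 * h2 + (1491) * α ^ 120 * h0 ^ 2 * h1 ^ 2) + ((48) * α ^ 120 * h0 ^ 2 * h2 ^ 2 + (96)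 * α ^ 120 * h0 * h1 ^ 2 * h2))) + ((((1741878528) * α ^ 120 * h0 * h1 * h2 ^ 2 + (8736) * α ^ 120 * h0 * h2 ^ 3) + ((8) * α ^ 120 * h1 ^ 4 + (580626176) * α ^ 120 * h1 ^ 3 * h2)) + (((13104) * α ^ 120 * h1 ^ 2 * h2 ^ 2 + (2) * α ^ 120 * h1 * h2 ^ 3) + ((145152539) * α ^ 120 * h2 ^ 4 + (94243968) * α ^ 119 * h0 ^ 2 * h2 ^ 2)))))))) + (((((((((188487936) * α ^ 119 * h0 * h1 ^ 2 * h2 + (15707328) * α ^ 119 * h1 ^ 4) + ((1826192640) * α ^ 119 * h1 * h2 ^ 3 + (-1) * α ^ 119 * h2 ^ 4)) + (((5652912) * α ^ 118 * h0 ^ 2 * h1 * h2 + (1884304) * α ^ 118 * h0 * h1 ^ 3) + ((3360) * α ^ 118 * h0 * h1 * h2 ^ 2 + (2145057720) * α ^ 118 * h0 * h2 ^ 3))) + ((((1120) * α ^ 118 * h1 ^ 3 * h2 + (3217586580) * α ^ 118 * h1 ^ 2 * h2 ^ 2) + ((1120) * α ^ 118 * h1 * h2 ^ 3 + (-1) *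 α ^ 118 * h2 ^ 4)) + (((9984) * α ^ 117 * h0 ^ 3 * h2 + (14976) * α ^ 117 * h0 ^ 2 * h1 ^ 2) + ((360) * α ^ 117 * h0 ^ 2 * h2 ^ 2 + (720) * α ^ 117 * h0 * h1 ^ 2 * h2)))) + (((((2858457120) * α ^ 117 * h0 * h1 * h2 ^ 2 + (3640) * α ^ 117 * h0 * h2 ^ 3) + ((60) * α ^ 117 * h1 ^ 4 + (952819040) * α ^ 117 * h1 ^ 3 * h2)) + (((5460) * α ^ 117 * h1 ^ 2 * h2 ^ 2 + (78536639) * α ^ 117 * h2 ^ 4) + ((2) * α ^ 116 * h0 ^ 3 * h1 + (225091620) * α ^ 116 * h0 ^ 2 * h2 ^ 2))) + ((((450183240) * α ^ 116 * h0 * h1 ^ 2 * h2 + (37515270) * α ^ 116 * h1 ^ 4) + ((1394456880) * α ^ 116 * h1 * h2 ^ 3 + (-1) * α ^ 116 * h2 ^ 4)) + (((21403392) * α ^ 115 * h0 ^ 2 * h1 * h2 + (7134464) * α ^ 115 * h0 * h1 ^ 3) + ((10920) * α ^ 115 * h0 * h1 * h2 ^ 2 + (2262913760) * α ^ 115 *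 h0 * h2 ^ 3))))) + ((((((3640) * α ^ 115 * h1 ^ 3 * h2 + (3394370640) * α ^ 115 * h1 ^ 2 * h2 ^ 2) + ((240) * α ^ 115 * h1 * h2 ^ 3 + (-1) * α ^ 115 * h2 ^ 4)) + (((72912) * α ^ 114 * h0 ^ 3 * h2 + (109368) * α ^ 114 * h0 ^ 2 * h1 ^ 2) + ((1680) * α ^ 114 * h0 ^ 2 * h2 ^ 2 + (3360) * α ^ 114 * h0 * h1 ^ 2 * h2))) + ((((4183447860) * α ^ 114 * h0 * h1 * h2 ^ 2 + (1120) * α ^ 114 * h0 * h2 ^ 3) + ((280) * α ^ 114 * h1 ^ 4 + (1394482620) * α ^ 114 * h1 ^ 3 * h2)) + (((1680) * α ^ 114 * h1 ^ 2 * h2 ^ 2 + (37515269) * α ^ 114 * h2 ^ 4) + ((64) * α ^ 113 * h0 ^ 3 * h1 + (471219840) * α ^ 113 * h0 ^ 2 * h2 ^ 2)))) + (((((942439680) * α ^ 113 * h0 * h1 ^ 2 * h2 + (78536640) * α ^ 113 * h1 ^ 4) + ((952796160) * α ^ 113 * h1 * h2 ^ 3 + (-1) * α ^ 113 * h2 ^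 4)) + (((68546952) * α ^ 112 * h0 ^ 2 * h1 * h2 + (3) * α ^ 112 * h0 ^ 2 * h2 ^ 2) + ((22848984) * α ^ 112 * h0 * h1 ^ 3 + (6) * α ^ 112 * h0 * h1 ^ 2 * h2))) + ((((26208) * α ^ 112 * h0 * h1 * h2 ^ 2 + (2145047996) * α ^ 112 * h0 * h2 ^ 3) + ((8736) * α ^ 112 * h1 ^ 3 * h2 + (3217571994) * α ^ 112 * h1 ^ 2 * h2 ^ 2)) + (((32) * α ^ 112 * h1 * h2 ^ 3 + (-1) * α ^ 112 * h2 ^ 4) + ((412672) * α ^ 111 * h0 ^ 3 * h2 + (619008) * α ^ 111 * h0 ^ 2 * h1 ^ 2)))))) + (((((((5460) * α ^ 111 * h0 ^ 2 * h2 ^ 2 + (10920) * α ^ 111 * h0 * h1 ^ 2 * h2) + ((5478646560) * α ^ 111 * h0 * h1 * h2 ^ 2 + (240) * α ^ 111 * h0 * h2 ^ 3)) + (((910) * α ^ 111 * h1 ^ 4 + (1826215520) * α ^ 111 * h1 ^ 3 * h2) + ((360) * α ^ 111 * h1 ^ 2 * h2 ^ 2 + (15707327) * α ^ 111 * h2 ^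 4))) + ((((994) * α ^ 110 * h0 ^ 3 * h1 + (870915240) * α ^ 110 * h0 ^ 2 * h2 ^ 2) + ((1741830480) * α ^ 110 * h0 * h1 ^ 2 * h2 + (145152540) * α ^ 110 * h1 ^ 4)) + (((580610160) * α ^ 110 * h1 * h2 ^ 3 + (188487936) * α ^ 109 * h0 ^ 2 * h1 * h2) + ((48) * α ^ 109 * h0 ^ 2 * h2 ^ 2 + (62829312) * α ^ 109 * h0 * h1 ^ 3)))) + (((((96) * α ^ 109 * h0 * h1 ^ 2 * h2 + (48048) * α ^ 109 * h0 * h1 * h2 ^ 2) + ((1826201376) * α ^ 109 * h0 * h2 ^ 3 + (7) * α ^ 109 * h1 ^ 4)) + (((16016) * α ^ 109 * h1 ^ 3 * h2 + (2739302064) * α ^ 109 * h1 ^ 2 * h2 ^ 2) + ((2) * α ^ 109 * h1 * h2 ^ 3 + (1884304) * α ^ 108 * h0 ^ 3 * h2))) + ((((2826456) * α ^ 108 * h0 ^ 2 * h1 ^ 2 + (6) * α ^ 108 * h0 ^ 2 * h1 * h2) + ((13104) * α ^ 108 * h0 ^ 2 * h2 ^ 2 + (2) * α ^ 108 * h0 *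 h1 ^ 3)) + (((26208) * α ^ 108 * h0 * h1 ^ 2 * h2 + (6435143988) * α ^ 108 * h0 * h1 * h2 ^ 2) + ((32) * α ^ 108 * h0 * h2 ^ 3 + (2183) * α ^ 108 * h1 ^ 4))))) + ((((((2145047996) * α ^ 108 * h1 ^ 3 * h2 + (48) * α ^ 108 * h1 ^ 2 * h2 ^ 2) + ((5712245) * α ^ 108 * h2 ^ 4 + (9984) * α ^ 107 * h0 ^ 3 * h1)) + (((1429194240) * α ^ 107 * h0 ^ 2 * h2 ^ 2 + (2858388480) * α ^ 107 * h0 * h1 ^ 2 * h2) + ((238199040) * α ^ 107 * h1 ^ 4 + (314146560) * α ^ 107 * h1 * h2 ^ 3))) + ((((-1) * α ^ 107 * h2 ^ 4 + (450183240) * α ^ 106 * h0 ^ 2 * h1 * h2) + ((360) * α ^ 106 * h0 ^ 2 * h2 ^ 2 + (150061080) * α ^ 106 * h0 * h1 ^ 3)) + (((720) * α ^ 106 * h0 * h1 ^ 2 * h2 + (68640) * α ^ 106 * h0 * h1 * h2 ^ 2) + ((1394460520) * α ^ 106 * h0 * h2 ^ 3 + (59) * α ^ 106 * h1 ^ 4))))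 + (((((22880) * α ^ 106 * h1 ^ 3 * h2 + (2091690780) * α ^ 106 * h1 ^ 2 * h2 ^ 2) + ((7134464) * α ^ 105 * h0 ^ 3 * h2 + (10701696) * α ^ 105 * h0 ^ 2 * h1 ^ 2)) + (((96) * α ^ 105 * h0 ^ 2 * h1 * h2 + (24024) * α ^ 105 * h0 ^ 2 * h2 ^ 2) + ((32) * α ^ 105 * h0 * h1 ^ 3 + (48048) * α ^ 105 * h0 * h1 ^ 2 * h2))) + ((((6788698848) * α ^ 105 * h0 * h1 * h2 ^ 2 + (2) * α ^ 105 * h0 * h2 ^ 3) + ((4003) * α ^ 105 * h1 ^ 4 + (2262899616) * α ^ 105 * h1 ^ 3 * h2)) + (((3) * α ^ 105 * h1 ^ 2 * h2 ^ 2 + (1783615) * α ^ 105 * h2 ^ 4) + ((72912) * α ^ 104 * h0 ^ 3 * h1 + (2091685320) * α ^ 104 * h0 ^ 2 * h2 ^ 2))))))) + ((((((((4183370640) * α ^ 104 * h0 * h1 ^ 2 * h2 + (348614219) * α ^ 104 * h1 ^ 4) + ((150061080) * α ^ 104 * h1 * h2 ^ 3 + (-1) * α ^ 104 * h2 ^ 4))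 + (((15) * α ^ 103 * h0 ^ 4 + (942439680) * α ^ 103 * h0 ^ 2 * h1 * h2) + ((1680) * α ^ 103 * h0 ^ 2 * h2 ^ 2 + (314146560) * α ^ 103 * h0 * h1 ^ 3))) + ((((3360) * α ^ 103 * h0 * h1 ^ 2 * h2 + (77220) * α ^ 103 * h0 * h1 * h2 ^ 2) + ((952797280) * α ^ 103 * h0 * h2 ^ 3 + (279) * α ^ 103 * h1 ^ 4)) + (((25740) * α ^ 103 * h1 ^ 3 * h2 + (1429195920) * α ^ 103 * h1 ^ 2 * h2 ^ 2) + ((-1) * α ^ 103 * h2 ^ 4 + (-1) * α ^ 102 * h0 ^ 4)))) + (((((22848984) * α ^ 102 * h0 ^ 3 * h2 + (34273476) * α ^ 102 * h0 ^ 2 * h1 ^ 2) + ((720) * α ^ 102 * h0 ^ 2 * h1 * h2 + (34320) * α ^ 102 * h0 ^ 2 * h2 ^ 2)) + (((240) * α ^ 102 * h0 * h1 ^ 3 + (68640) * α ^ 102 * h0 * h1 ^ 2 * h2) + ((6435106860) * α ^ 102 * h0 * h1 * h2 ^ 2 + (5719) * α ^ 102 * h1 ^ 4))) + ((((2145035620)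 * α ^ 102 * h1 ^ 3 * h2 + (471075) * α ^ 102 * h2 ^ 4) + ((412672) * α ^ 101 * h0 ^ 3 * h1 + (2739288960) * α ^ 101 * h0 ^ 2 * h2 ^ 2)) + (((5478577920) * α ^ 101 * h0 * h1 ^ 2 * h2 + (456548159) * α ^ 101 * h1 ^ 4) + ((62829312) * α ^ 101 * h1 * h2 ^ 3 + (-1) * α ^ 101 * h2 ^ 4))))) + ((((((248) * α ^ 100 * h0 ^ 4 + (1741830480) * α ^ 100 * h0 ^ 2 * h1 * h2) + ((5460) * α ^ 100 * h0 ^ 2 * h2 ^ 2 + (580610160) * α ^ 100 * h0 * h1 ^ 3)) + (((10920) * α ^ 100 * h0 * h1 ^ 2 * h2 + (68640) * α ^ 100 * h0 * h1 * h2 ^ 2) + ((580610400) * α ^ 100 * h0 * h2 ^ 3 + (909) * α ^ 100 * h1 ^ 4))) + ((((22880) * α ^ 100 * h1 ^ 3 * h2 + (870915600) * α ^ 100 * h1 ^ 2 * h2 ^ 2) + ((-1) * α ^ 100 * h2 ^ 4 + (-1) * α ^ 99 * h0 ^ 4)) + (((62829312) * α ^ 99 * h0 ^ 3 * h2 + (94243968)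 * α ^ 99 * h0 ^ 2 * h1 ^ 2) + ((3360) * α ^ 99 * h0 ^ 2 * h1 * h2 + (38610) * α ^ 99 * h0 ^ 2 * h2 ^ 2)))) + (((((1120) * α ^ 99 * h0 * h1 ^ 3 + (77220) * α ^ 99 * h0 * h1 ^ 2 * h2) + ((5478581280) * α ^ 99 * h0 * h1 * h2 ^ 2 + (6434) * α ^ 99 * h1 ^ 4)) + (((1826193760) * α ^ 99 * h1 ^ 3 * h2 + (103167) * α ^ 99 * h2 ^ 4) + ((-1) * α ^ 98 * h0 ^ 4 + (1884304) * α ^ 98 * h0 ^ 3 * h1))) + ((((3217547970) * α ^ 98 * h0 ^ 2 * h2 ^ 2 + (6435095940) * α ^ 98 * h0 * h1 ^ 2 * h2) + ((536257994) * α ^ 98 * h1 ^ 4 + (22848984) * α ^ 98 * h1 * h2 ^ 3)) + (((-1) * α ^ 98 * h2 ^ 4 + (2496) * α ^ 97 * h0 ^ 4) + ((2858388486) * α ^ 97 * h0 ^ 2 * h1 * h2 + (13104) * α ^ 97 * h0 ^ 2 * h2 ^ 2)))))) + (((((((952796162) * α ^ 97 * h0 * h1 ^ 3 + (26208) * α ^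 97 * h0 * h1 ^ 2 * h2) + ((48048) * α ^ 97 * h0 * h1 * h2 ^ 2 + (314146592) * α ^ 97 * h0 * h2 ^ 3)) + (((2183) * α ^ 97 * h1 ^ 4 + (16016) * α ^ 97 * h1 ^ 3 * h2) + ((471219888) * α ^ 97 * h1 ^ 2 * h2 ^ 2 + (-1) * α ^ 97 * h2 ^ 4))) + ((((150061080) * α ^ 96 * h0 ^ 3 * h2 + (225091620) * α ^ 96 * h0 ^ 2 * h1 ^ 2) + ((10920) * α ^ 96 * h0 ^ 2 * h1 * h2 + (34320) * α ^ 96 * h0 ^ 2 * h2 ^ 2)) + (((3640) * α ^ 96 * h0 * h1 ^ 3 + (68640) * α ^ 96 * h0 * h1 ^ 2 * h2) + ((4183371360) * α ^ 96 * h0 * h1 * h2 ^ 2 + (5720) * α ^ 96 * h1 ^ 4)))) + (((((1394457120) * α ^ 96 * h1 ^ 3 * h2 + (18227) * α ^ 96 * h2 ^ 4) + ((-1) * α ^ 95 * h0 ^ 4 + (7134464) * α ^ 95 * h0 ^ 3 * h1)) + (((3394336320) * α ^ 95 * h0 ^ 2 * h2 ^ 2 + (6788672640) * α ^ 95 * h0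 * h1 ^ 2 * h2) + ((565722720) * α ^ 95 * h1 ^ 4 + (7134464) * α ^ 95 * h1 * h2 ^ 3))) + ((((18227) * α ^ 94 * h0 ^ 4 + (4183370736) * α ^ 94 * h0 ^ 2 * h1 * h2) + ((24024) * α ^ 94 * h0 ^ 2 * h2 ^ 2 + (1394456912) * α ^ 94 * h0 * h1 ^ 3)) + (((48048) * α ^ 94 * h0 * h1 ^ 2 * h2 + (26208) * α ^ 94 * h0 * h1 * h2 ^ 2) + ((150061082) * α ^ 94 * h0 * h2 ^ 3 + (4003) * α ^ 94 * h1 ^ 4))))) + ((((((8736) * α ^ 94 * h1 ^ 3 * h2 + (225091623) * α ^ 94 * h1 ^ 2 * h2 ^ 2) + ((314146562) * α ^ 93 * h0 ^ 3 * h2 + (471219843) * α ^ 93 * h0 ^ 2 * h1 ^ 2)) + (((26208) * α ^ 93 * h0 ^ 2 * h1 * h2 + (24024) * α ^ 93 * h0 ^ 2 * h2 ^ 2) + ((8736) * α ^ 93 * h0 * h1 ^ 3 + (48048) * α ^ 93 * h0 * h1 ^ 2 * h2))) + ((((2858388576) * α ^ 93 * h0 * h1 * h2 ^ 2 + (4003)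 * α ^ 93 * h1 ^ 4) + ((952796192) * α ^ 93 * h1 ^ 3 * h2 + (2495) * α ^ 93 * h2 ^ 4)) + (((-1) * α ^ 92 * h0 ^ 4 + (22848984) * α ^ 92 * h0 ^ 3 * h1) + ((3217547970) * α ^ 92 * h0 ^ 2 * h2 ^ 2 + (6435095940) * α ^ 92 * h0 * h1 ^ 2 * h2)))) + (((((536257995) * α ^ 92 * h1 ^ 4 + (1884304) * α ^ 92 * h1 * h2 ^ 3) + ((-1) * α ^ 92 * h2 ^ 4 + (103167) * α ^ 91 * h0 ^ 4)) + (((5478578640) * α ^ 91 * h0 ^ 2 * h1 * h2 + (34320) * α ^ 91 * h0 ^ 2 * h2 ^ 2) + ((1826192880) * α ^ 91 * h0 * h1 ^ 3 + (68640) * α ^ 91 * h0 * h1 ^ 2 * h2))) + ((((10920) * α ^ 91 * h0 * h1 * h2 ^ 2 + (62829312) * α ^ 91 * h0 * h2 ^ 3) + ((5719) * α ^ 91 * h1 ^ 4 + (3640) * α ^ 91 * h1 ^ 3 * h2)) + (((94243968) * α ^ 91 * h1 ^ 2 * h2 ^ 2 + (-1) * α ^ 90 * h0 ^ 4) + ((580610192)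 * α ^ 90 * h0 ^ 3 * h2 + (870915288) * α ^ 90 * h0 ^ 2 * h1 ^ 2))))))))) + ((((((((((48048) * α ^ 90 * h0 ^ 2 * h1 * h2 + (13104) * α ^ 90 * h0 ^ 2 * h2 ^ 2) + ((16016) * α ^ 90 * h0 * h1 ^ 3 + (26208) * α ^ 90 * h0 * h1 ^ 2 * h2)) + (((1741830486) * α ^ 90 * h0 * h1 * h2 ^ 2 + (2183) * α ^ 90 * h1 ^ 4) + ((580610162) * α ^ 90 * h1 ^ 3 * h2 + (248) * α ^ 90 * h2 ^ 4))) + ((((-1) * α ^ 89 * h0 ^ 4 + (62829312) * α ^ 89 * h0 ^ 3 * h1) + ((2739288960) * α ^ 89 * h0 ^ 2 * h2 ^ 2 + (5478577920) * α ^ 89 * h0 * h1 ^ 2 * h2)) + (((456548159) * α ^ 89 * h1 ^ 4 + (412672) * α ^ 89 * h1 * h2 ^ 3) + ((-1) * α ^ 89 * h2 ^ 4 + (471075) * α ^ 88 * h0 ^ 4)))) + (((((6435099300) * α ^ 88 * h0 ^ 2 * h1 * h2 + (38610) * α ^ 88 * h0 ^ 2 * h2 ^ 2) + ((2145033100) *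 α ^ 88 * h0 * h1 ^ 3 + (77220) * α ^ 88 * h0 * h1 ^ 2 * h2)) + (((3360) * α ^ 88 * h0 * h1 * h2 ^ 2 + (22848984) * α ^ 88 * h0 * h2 ^ 3) + ((6434) * α ^ 88 * h1 ^ 4 + (1120) * α ^ 88 * h1 ^ 3 * h2))) + ((((34273476) * α ^ 88 * h1 ^ 2 * h2 ^ 2 + (-1) * α ^ 88 * h2 ^ 4) + ((-1) * α ^ 87 * h0 ^ 4 + (952796400) * α ^ 87 * h0 ^ 3 * h2)) + (((1429194600) * α ^ 87 * h0 ^ 2 * h1 ^ 2 + (68640) * α ^ 87 * h0 ^ 2 * h1 * h2) + ((5460) * α ^ 87 * h0 ^ 2 * h2 ^ 2 + (22880) * α ^ 87 * h0 * h1 ^ 3))))) + ((((((10920) * α ^ 87 * h0 * h1 ^ 2 * h2 + (942439680) * α ^ 87 * h0 * h1 * h2 ^ 2) + ((909) * α ^ 87 * h1 ^ 4 + (314146560) * α ^ 87 * h1 ^ 3 * h2)) + (((16) * α ^ 87 * h2 ^ 4 + (-1) * α ^ 86 * h0 ^ 4) + ((150061080) * α ^ 86 * h0 ^ 3 * h1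 + (2091685320) * α ^ 86 * h0 ^ 2 * h2 ^ 2))) + ((((4183370640) * α ^ 86 * h0 * h1 ^ 2 * h2 + (348614219) * α ^ 86 * h1 ^ 4) + ((72912) * α ^ 86 * h1 * h2 ^ 3 + (1783615) * α ^ 85 * h0 ^ 4)) + (((6788683560) * α ^ 85 * h0 ^ 2 * h1 * h2 + (34320) * α ^ 85 * h0 ^ 2 * h2 ^ 2) + ((2262894520) * α ^ 85 * h0 * h1 ^ 3 + (68640) * α ^ 85 * h0 * h1 ^ 2 * h2)))) + (((((720) * α ^ 85 * h0 * h1 * h2 ^ 2 + (7134464) * α ^ 85 * h0 * h2 ^ 3) + ((5719) * α ^ 85 * h1 ^ 4 + (240) * α ^ 85 * h1 ^ 3 * h2)) + (((10701696) * α ^ 85 * h1 ^ 2 * h2 ^ 2 + (-1) * α ^ 85 * h2 ^ 4) + ((-1) * α ^ 84 * h0 ^ 4 + (1394458000) * α ^ 84 * h0 ^ 3 * h2))) + ((((2091687000) * α ^ 84 * h0 ^ 2 * h1 ^ 2 + (77220) * α ^ 84 * h0 ^ 2 * h1 * h2) + ((1680) * α ^ 84 * h0 ^ 2 * h2 ^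 2 + (25740) * α ^ 84 * h0 * h1 ^ 3)) + (((3360) * α ^ 84 * h0 * h1 ^ 2 * h2 + (450183240) * α ^ 84 * h0 * h1 * h2 ^ 2) + ((279) * α ^ 84 * h1 ^ 4 + (150061080) * α ^ 84 * h1 ^ 3 * h2)))))) + (((((((-1) * α ^ 83 * h0 ^ 4 + (314146560) * α ^ 83 * h0 ^ 3 * h1) + ((1429194240) * α ^ 83 * h0 ^ 2 * h2 ^ 2 + (2858388480) * α ^ 83 * h0 * h1 ^ 2 * h2)) + (((238199039) * α ^ 83 * h1 ^ 4 + (9984) * α ^ 83 * h1 * h2 ^ 3) + ((5712246) * α ^ 82 * h0 ^ 4 + (2) * α ^ 82 * h0 ^ 3 * h2))) + ((((3) * α ^ 82 * h0 ^ 2 * h1 ^ 2 + (6435122148) * α ^ 82 * h0 ^ 2 * h1 * h2) + ((24024) * α ^ 82 * h0 ^ 2 * h2 ^ 2 + (2145040716) * α ^ 82 * h0 * h1 ^ 3)) + (((48048) * α ^ 82 * h0 * h1 ^ 2 * h2 + (96) * α ^ 82 * h0 * h1 * h2 ^ 2) + ((1884304) * α ^ 82 * h0 * h2 ^ 3 +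 (4003) * α ^ 82 * h1 ^ 4)))) + (((((32) * α ^ 82 * h1 ^ 3 * h2 + (2826456) * α ^ 82 * h1 ^ 2 * h2 ^ 2) + ((-1) * α ^ 82 * h2 ^ 4 + (1826196280) * α ^ 81 * h0 ^ 3 * h2)) + (((2739294420) * α ^ 81 * h0 ^ 2 * h1 ^ 2 + (68640) * α ^ 81 * h0 ^ 2 * h1 * h2) + ((360) * α ^ 81 * h0 ^ 2 * h2 ^ 2 + (22880) * α ^ 81 * h0 * h1 ^ 3))) + ((((720) * α ^ 81 * h0 * h1 ^ 2 * h2 + (188487936) * α ^ 81 * h0 * h1 * h2 ^ 2) + ((60) * α ^ 81 * h1 ^ 4 + (62829312) * α ^ 81 * h1 ^ 3 * h2)) + (((-1) * α ^ 81 * h2 ^ 4 + (-1) * α ^ 80 * h0 ^ 4) + ((580610160) * α ^ 80 * h0 ^ 3 * h1 + (870915240) * α ^ 80 * h0 ^ 2 * h2 ^ 2))))) + ((((((1741830480) * α ^ 80 * h0 * h1 ^ 2 * h2 + (145152540) * α ^ 80 * h1 ^ 4) + ((994) * α ^ 80 * h1 * h2 ^ 3 + (15707327) * α ^ 79 * h0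 ^ 4)) + (((32) * α ^ 79 * h0 ^ 3 * h2 + (48) * α ^ 79 * h0 ^ 2 * h1 ^ 2) + ((5478625968) * α ^ 79 * h0 ^ 2 * h1 * h2 + (13104) * α ^ 79 * h0 ^ 2 * h2 ^ 2))) + ((((1826208656) * α ^ 79 * h0 * h1 ^ 3 + (26208) * α ^ 79 * h0 * h1 ^ 2 * h2) + ((6) * α ^ 79 * h0 * h1 * h2 ^ 2 + (412672) * α ^ 79 * h0 * h2 ^ 3)) + (((2183) * α ^ 79 * h1 ^ 4 + (2) * α ^ 79 * h1 ^ 3 * h2) + ((619008) * α ^ 79 * h1 ^ 2 * h2 ^ 2 + (-1) * α ^ 79 * h2 ^ 4)))) + (((((2) * α ^ 78 * h0 ^ 3 * h1 + (2145040716) * α ^ 78 * h0 ^ 3 * h2) + ((3217561074) * α ^ 78 * h0 ^ 2 * h1 ^ 2 + (48048) * α ^ 78 * h0 ^ 2 * h1 * h2)) + (((48) * α ^ 78 * h0 ^ 2 * h2 ^ 2 + (16016) * α ^ 78 * h0 * h1 ^ 3) + ((96) * α ^ 78 * h0 * h1 ^ 2 * h2 + (68546952) * α ^ 78 * h0 *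 h1 * h2 ^ 2))) + ((((7) * α ^ 78 * h1 ^ 4 + (22848984) * α ^ 78 * h1 ^ 3 * h2) + ((-1) * α ^ 78 * h2 ^ 4 + (-1) * α ^ 77 * h0 ^ 4)) + (((952796160) * α ^ 77 * h0 ^ 3 * h1 + (471219840) * α ^ 77 * h0 ^ 2 * h2 ^ 2) + ((942439680) * α ^ 77 * h0 * h1 ^ 2 * h2 + (78536640) * α ^ 77 * h1 ^ 4))))))) + ((((((((64) * α ^ 77 * h1 * h2 ^ 3 + (-1) * α ^ 77 * h2 ^ 4) + ((37515269) * α ^ 76 * h0 ^ 4 + (240) * α ^ 76 * h0 ^ 3 * h2)) + (((360) * α ^ 76 * h0 ^ 2 * h1 ^ 2 + (4183439280) * α ^ 76 * h0 ^ 2 * h1 * h2) + ((5460) * α ^ 76 * h0 ^ 2 * h2 ^ 2 + (1394479760) * α ^ 76 * h0 * h1 ^ 3))) + ((((10920) * α ^ 76 * h0 * h1 ^ 2 * h2 + (72912) * α ^ 76 * h0 * h2 ^ 3) + ((909) * α ^ 76 * h1 ^ 4 + (109368) * α ^ 76 * h1 ^ 2 * h2 ^ 2)) + (((-1) * α ^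 76 * h2 ^ 4 + (-1) * α ^ 75 * h0 ^ 4) + ((32) * α ^ 75 * h0 ^ 3 * h1 + (2262906896) * α ^ 75 * h0 ^ 3 * h2)))) + (((((3394360344) * α ^ 75 * h0 ^ 2 * h1 ^ 2 + (26208) * α ^ 75 * h0 ^ 2 * h1 * h2) + ((3) * α ^ 75 * h0 ^ 2 * h2 ^ 2 + (8736) * α ^ 75 * h0 * h1 ^ 3)) + (((6) * α ^ 75 * h0 * h1 ^ 2 * h2 + (21403392) * α ^ 75 * h0 * h1 * h2 ^ 2) + ((-1) * α ^ 75 * h1 ^ 4 + (7134464) * α ^ 75 * h1 ^ 3 * h2))) + ((((-1) * α ^ 75 * h2 ^ 4 + (-1) * α ^ 74 * h0 ^ 4) + ((1394456880) * α ^ 74 * h0 ^ 3 * h1 + (225091620) * α ^ 74 * h0 ^ 2 * h2 ^ 2)) + (((450183240) * α ^ 74 * h0 * h1 ^ 2 * h2 + (37515269) * α ^ 74 * h1 ^ 4) + ((2) * α ^ 74 * h1 * h2 ^ 3 + (-1) * α ^ 74 * h2 ^ 4))))) + ((((((78536639) * α ^ 73 * h0 ^ 4 + (1120) * α ^ 73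 * h0 ^ 3 * h2) + ((1680) * α ^ 73 * h0 ^ 2 * h1 ^ 2 + (2858465700) * α ^ 73 * h0 ^ 2 * h1 * h2)) + (((1680) * α ^ 73 * h0 ^ 2 * h2 ^ 2 + (952821900) * α ^ 73 * h0 * h1 ^ 3) + ((3360) * α ^ 73 * h0 * h1 ^ 2 * h2 + (9984) * α ^ 73 * h0 * h2 ^ 3))) + ((((279) * α ^ 73 * h1 ^ 4 + (14976) * α ^ 73 * h1 ^ 2 * h2 ^ 2) + ((-1) * α ^ 73 * h2 ^ 4 + (-1) * α ^ 72 * h0 ^ 4)) + (((240) * α ^ 72 * h0 ^ 3 * h1 + (2145054860) * α ^ 72 * h0 ^ 3 * h2) + ((3217582290) * α ^ 72 * h0 ^ 2 * h1 ^ 2 + (10920) * α ^ 72 * h0 ^ 2 * h1 * h2)))) + (((((3640) * α ^ 72 * h0 * h1 ^ 3 + (5652912) * α ^ 72 * h0 * h1 * h2 ^ 2) + ((-1) * α ^ 72 * h1 ^ 4 + (1884304) * α ^ 72 * h1 ^ 3 * h2)) + (((-1) * α ^ 72 * h2 ^ 4 + (-1) * α ^ 71 * h0 ^ 4) + ((1826192640)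 * α ^ 71 * h0 ^ 3 * h1 + (94243968) * α ^ 71 * h0 ^ 2 * h2 ^ 2))) + ((((188487936) * α ^ 71 * h0 * h1 ^ 2 * h2 + (15707327) * α ^ 71 * h1 ^ 4) + ((-1) * α ^ 71 * h2 ^ 4 + (145152539) * α ^ 70 * h0 ^ 4)) + (((3640) * α ^ 70 * h0 ^ 3 * h2 + (5460) * α ^ 70 * h0 ^ 2 * h1 ^ 2) + ((1741899120) * α ^ 70 * h0 ^ 2 * h1 * h2 + (360) * α ^ 70 * h0 ^ 2 * h2 ^ 2)))))) + (((((((580633040) * α ^ 70 * h0 * h1 ^ 3 + (720) * α ^ 70 * h0 * h1 ^ 2 * h2) + ((994) * α ^ 70 * h0 * h2 ^ 3 + (59) * α ^ 70 * h1 ^ 4)) + (((1491) * α ^ 70 * h1 ^ 2 * h2 ^ 2 + (-1) * α ^ 70 * h2 ^ 4) + ((-1) * α ^ 69 * h0 ^ 4 + (1120) * α ^ 69 * h0 ^ 3 * h1))) + ((((1826218380) * α ^ 69 * h0 ^ 3 * h2 + (2739327570) * α ^ 69 * h0 ^ 2 * h1 ^ 2) + ((3360) * α ^ 69 * h0 ^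 2 * h1 * h2 + (1120) * α ^ 69 * h0 * h1 ^ 3)) + (((1238016) * α ^ 69 * h0 * h1 * h2 ^ 2 + (-1) * α ^ 69 * h1 ^ 4) + ((412672) * α ^ 69 * h1 ^ 3 * h2 + (-1) * α ^ 68 * h0 ^ 4)))) + (((((2145031980) * α ^ 68 * h0 ^ 3 * h1 + (34273476) * α ^ 68 * h0 ^ 2 * h2 ^ 2) + ((68546952) * α ^ 68 * h0 * h1 ^ 2 * h2 + (5712246) * α ^ 68 * h1 ^ 4)) + (((238199040) * α ^ 67 * h0 ^ 4 + (2) * α ^ 67 * h0 ^ 3 * h1) + ((8736) * α ^ 67 * h0 ^ 3 * h2 + (13104) * α ^ 67 * h0 ^ 2 * h1 ^ 2))) + ((((942487728) * α ^ 67 * h0 ^ 2 * h1 * h2 + (48) * α ^ 67 * h0 ^ 2 * h2 ^ 2) + ((314162576) * α ^ 67 * h0 * h1 ^ 3 + (96) * α ^ 67 * h0 * h1 ^ 2 * h2)) + (((64) * α ^ 67 * h0 * h2 ^ 3 + (8) * α ^ 67 * h1 ^ 4) + ((96) * α ^ 67 * h1 ^ 2 * h2 ^ 2 + (-1) * α ^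 67 * h2 ^ 4))))) + ((((((3640) * α ^ 66 * h0 ^ 3 * h1 + (1394479760) * α ^ 66 * h0 ^ 3 * h2) + ((2091719640) * α ^ 66 * h0 ^ 2 * h1 ^ 2 + (720) * α ^ 66 * h0 ^ 2 * h1 * h2)) + (((240) * α ^ 66 * h0 * h1 ^ 3 + (218736) * α ^ 66 * h0 * h1 * h2 ^ 2) + ((-1) * α ^ 66 * h1 ^ 4 + (72912) * α ^ 66 * h1 ^ 3 * h2))) + ((((3) * α ^ 66 * h2 ^ 4 + (-1) * α ^ 65 * h0 ^ 4) + ((2262890880) * α ^ 65 * h0 ^ 3 * h1 + (10701696) * α ^ 65 * h0 ^ 2 * h2 ^ 2)) + (((21403392) * α ^ 65 * h0 * h1 ^ 2 * h2 + (1783615) * α ^ 65 * h1 ^ 4) + ((3) * α ^ 65 * h2 ^ 4 + (348614219) * α ^ 64 * h0 ^ 4)))) + (((((32) * α ^ 64 * h0 ^ 3 * h1 + (16016) * α ^ 64 * h0 ^ 3 * h2) + ((24024) * α ^ 64 * h0 ^ 2 * h1 ^ 2 + (450209448) * α ^ 64 * h0 ^ 2 * h1 * h2)) + (((3) * α ^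 64 * h0 ^ 2 * h2 ^ 2 + (150069816) * α ^ 64 * h0 * h1 ^ 3) + ((6) * α ^ 64 * h0 * h1 ^ 2 * h2 + (2) * α ^ 64 * h0 * h2 ^ 3))) + ((((3) * α ^ 64 * h1 ^ 2 * h2 ^ 2 + (2) * α ^ 64 * h1 * h2 ^ 3) + ((-1) * α ^ 64 * h2 ^ 4 + (8736) * α ^ 63 * h0 ^ 3 * h1)) + (((952812176) * α ^ 63 * h0 ^ 3 * h2 + (1429218264) * α ^ 63 * h0 ^ 2 * h1 ^ 2) + ((96) * α ^ 63 * h0 ^ 2 * h1 * h2 + (32) * α ^ 63 * h0 * h1 ^ 3)))))))) + (((((((((29952) * α ^ 63 * h0 * h1 * h2 ^ 2 + (-1) * α ^ 63 * h1 ^ 4) + ((9984) * α ^ 63 * h1 ^ 3 * h2 + (2) * α ^ 63 * h1 * h2 ^ 3)) + (((13) * α ^ 63 * h2 ^ 4 + (-1) * α ^ 62 * h0 ^ 4) + ((2145031980) * α ^ 62 * h0 ^ 3 * h1 + (2826456) * α ^ 62 * h0 ^ 2 * h2 ^ 2))) + ((((5652912) * α ^ 62 * h0 * h1 ^ 2 *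 h2 + (471075) * α ^ 62 * h1 ^ 4) + ((14) * α ^ 62 * h2 ^ 4 + (456548159) * α ^ 61 * h0 ^ 4)) + (((240) * α ^ 61 * h0 ^ 3 * h1 + (22880) * α ^ 61 * h0 ^ 3 * h2) + ((34320) * α ^ 61 * h0 ^ 2 * h1 ^ 2 + (188498856) * α ^ 61 * h0 ^ 2 * h1 * h2)))) + (((((62832952) * α ^ 61 * h0 * h1 ^ 3 + (-1) * α ^ 61 * h1 ^ 4) + ((16) * α ^ 61 * h1 * h2 ^ 3 + (7) * α ^ 60 * h0 ^ 4)) + (((16016) * α ^ 60 * h0 ^ 3 * h1 + (580618896) * α ^ 60 * h0 ^ 3 * h2) + ((870928344) * α ^ 60 * h0 ^ 2 * h1 ^ 2 + (6) * α ^ 60 * h0 ^ 2 * h1 * h2))) + ((((2) * α ^ 60 * h0 * h1 ^ 3 + (2982) * α ^ 60 * h0 * h1 * h2 ^ 2) + ((-1) * α ^ 60 * h1 ^ 4 + (994) * α ^ 60 * h1 ^ 3 * h2)) + (((16) * α ^ 60 * h1 * h2 ^ 3 + (27) * α ^ 60 * h2 ^ 4) + ((-1) * α ^ 59 * h0 ^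 4 + (1826192640) * α ^ 59 * h0 ^ 3 * h1))))) + ((((((619008) * α ^ 59 * h0 ^ 2 * h2 ^ 2 + (1238016) * α ^ 59 * h0 * h1 ^ 2 * h2) + ((2) * α ^ 59 * h0 * h2 ^ 3 + (103167) * α ^ 59 * h1 ^ 4)) + (((3) * α ^ 59 * h1 ^ 2 * h2 ^ 2 + (27) * α ^ 59 * h2 ^ 4) + ((536257994) * α ^ 58 * h0 ^ 4 + (1120) * α ^ 58 * h0 ^ 3 * h1))) + ((((25740) * α ^ 58 * h0 ^ 3 * h2 + (38610) * α ^ 58 * h0 ^ 2 * h1 ^ 2) + ((68550312) * α ^ 58 * h0 ^ 2 * h1 * h2 + (22850104) * α ^ 58 * h0 * h1 ^ 3)) + (((2) * α ^ 58 * h0 * h2 ^ 3 + (3) * α ^ 58 * h1 ^ 2 * h2 ^ 2) + ((56) * α ^ 58 * h1 * h2 ^ 3 + (60) * α ^ 57 * h0 ^ 4)))) + (((((22880) * α ^ 57 * h0 ^ 3 * h1 + (314150200) * α ^ 57 * h0 ^ 3 * h2) + ((471225300) * α ^ 57 * h0 ^ 2 * h1 ^ 2 + (192) * α ^ 57 *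 h0 * h1 * h2 ^ 2)) + (((64) * α ^ 57 * h1 ^ 3 * h2 + (56) * α ^ 57 * h1 * h2 ^ 3) + ((34) * α ^ 57 * h2 ^ 4 + (1394456880) * α ^ 56 * h0 ^ 3 * h1))) + ((((109368) * α ^ 56 * h0 ^ 2 * h2 ^ 2 + (218736) * α ^ 56 * h0 * h1 ^ 2 * h2) + ((16) * α ^ 56 * h0 * h2 ^ 3 + (18227) * α ^ 56 * h1 ^ 4)) + (((24) * α ^ 56 * h1 ^ 2 * h2 ^ 2 + (34) * α ^ 56 * h2 ^ 4) + ((565722719) * α ^ 55 * h0 ^ 4 + (3640) * α ^ 55 * h0 ^ 3 * h1)))))) + (((((((22880) * α ^ 55 * h0 ^ 3 * h2 + (34320) * α ^ 55 * h0 ^ 2 * h1 ^ 2) + ((21404112) * α ^ 55 * h0 ^ 2 * h1 * h2 + (7134704) * α ^ 55 * h0 * h1 ^ 3)) + (((16) * α ^ 55 * h0 * h2 ^ 3 + (-1) * α ^ 55 * h1 ^ 4) + ((24) * α ^ 55 * h1 ^ 2 * h2 ^ 2 + (112) * α ^ 55 * h1 * h2 ^ 3))) + ((((-1) * α ^ 55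 * h2 ^ 4 + (279) * α ^ 54 * h0 ^ 4) + ((25740) * α ^ 54 * h0 ^ 3 * h1 + (150062200) * α ^ 54 * h0 ^ 3 * h2)) + (((225093300) * α ^ 54 * h0 ^ 2 * h1 ^ 2 + (12) * α ^ 54 * h0 * h1 * h2 ^ 2) + ((4) * α ^ 54 * h1 ^ 3 * h2 + (112) * α ^ 54 * h1 * h2 ^ 3)))) + (((((27) * α ^ 54 * h2 ^ 4 + (2) * α ^ 54 * h2) + ((952796160) * α ^ 53 * h0 ^ 3 * h1 + (14976) * α ^ 53 * h0 ^ 2 * h2 ^ 2)) + (((29952) * α ^ 53 * h0 * h1 ^ 2 * h2 + (6) * α ^ 53 * h0 * h1 * h2 ^ 2) + ((56) * α ^ 53 * h0 * h2 ^ 3 + (2495) * α ^ 53 * h1 ^ 4))) + ((((2) * α ^ 53 * h1 ^ 3 * h2 + (84) * α ^ 53 * h1 ^ 2 * h2 ^ 2) + ((27) * α ^ 53 * h2 ^ 4 + (-1) * α ^ 53 * h2)) + (((536257995) * α ^ 52 * h0 ^ 4 + (8736) * α ^ 52 * h0 ^ 3 * h1) + ((16016) * α ^ 52 * h0 ^ 3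 * h2 + (24024) * α ^ 52 * h0 ^ 2 * h1 ^ 2))))) + ((((((5653008) * α ^ 52 * h0 ^ 2 * h1 * h2 + (1884336) * α ^ 52 * h0 * h1 ^ 3) + ((56) * α ^ 52 * h0 * h2 ^ 3 + (-1) * α ^ 52 * h1 ^ 4)) + (((84) * α ^ 52 * h1 ^ 2 * h2 ^ 2 + (140) * α ^ 52 * h1 * h2 ^ 3) + ((-1) * α ^ 52 * h2 ^ 4 + (909) * α ^ 51 * h0 ^ 4))) + ((((22880) * α ^ 51 * h0 ^ 3 * h1 + (62829552) * α ^ 51 * h0 ^ 3 * h2) + ((94244328) * α ^ 51 * h0 ^ 2 * h1 ^ 2 + (48) * α ^ 51 * h0 * h1 * h2 ^ 2)) + (((-1) * α ^ 51 * h1 ^ 4 + (16) * α ^ 51 * h1 ^ 3 * h2) + ((140) * α ^ 51 * h1 * h2 ^ 3 + (13) * α ^ 51 * h2 ^ 4)))) + (((((7) * α ^ 51 * h2 + (-1) * α ^ 50 * h0 ^ 4) + ((580610160) * α ^ 50 * h0 ^ 3 * h1 + (1491) * α ^ 50 * h0 ^ 2 * h2 ^ 2)) + (((2982) * α ^ 50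 * h0 * h1 ^ 2 * h2 + (48) * α ^ 50 * h0 * h1 * h2 ^ 2) + ((112) * α ^ 50 * h0 * h2 ^ 3 + (248) * α ^ 50 * h1 ^ 4))) + ((((16) * α ^ 50 * h1 ^ 3 * h2 + (168) * α ^ 50 * h1 ^ 2 * h2 ^ 2) + ((13) * α ^ 50 * h2 ^ 4 + (-1) * α ^ 50 * h2)) + (((456548168) * α ^ 49 * h0 ^ 4 + (16016) * α ^ 49 * h0 ^ 3 * h1) + ((8736) * α ^ 49 * h0 ^ 3 * h2 + (13104) * α ^ 49 * h0 ^ 2 * h1 ^ 2))))))) + ((((((((1238022) * α ^ 49 * h0 ^ 2 * h1 * h2 + (3) * α ^ 49 * h0 ^ 2 * h2 ^ 2) + ((412674) * α ^ 49 * h0 * h1 ^ 3 + (6) * α ^ 49 * h0 * h1 ^ 2 * h2)) + (((112) * α ^ 49 * h0 * h2 ^ 3 + (168) * α ^ 49 * h1 ^ 2 * h2 ^ 2) + ((112) * α ^ 49 * h1 * h2 ^ 3 + (-1) * α ^ 49 * h2 ^ 4))) + ((((-1) * α ^ 49 * h2 + (2184) * α ^ 48 * h0 ^ 4) + ((16016)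 * α ^ 48 * h0 ^ 3 * h1 + (22849016) * α ^ 48 * h0 ^ 3 * h2)) + (((34273524) * α ^ 48 * h0 ^ 2 * h1 ^ 2 + (3) * α ^ 48 * h0 ^ 2 * h2 ^ 2) + ((6) * α ^ 48 * h0 * h1 ^ 2 * h2 + (168) * α ^ 48 * h0 * h1 * h2 ^ 2)))) + (((((56) * α ^ 48 * h1 ^ 3 * h2 + (112) * α ^ 48 * h1 * h2 ^ 3) + ((3) * α ^ 48 * h2 ^ 4 + (16) * α ^ 48 * h2)) + (((-1) * α ^ 47 * h0 ^ 4 + (314146560) * α ^ 47 * h0 ^ 3 * h1) + ((96) * α ^ 47 * h0 ^ 2 * h2 ^ 2 + (192) * α ^ 47 * h0 * h1 ^ 2 * h2))) + ((((168) * α ^ 47 * h0 * h1 * h2 ^ 2 + (140) * α ^ 47 * h0 * h2 ^ 3) + ((15) * α ^ 47 * h1 ^ 4 + (56) * α ^ 47 * h1 ^ 3 * h2)) + (((210) * α ^ 47 * h1 ^ 2 * h2 ^ 2 + (4) * α ^ 47 * h2 ^ 4) + ((-1) * α ^ 47 * h2 + (348614279) * α ^ 46 * h0 ^ 4))))) +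 ((((((22880) * α ^ 46 * h0 ^ 3 * h1 + (3640) * α ^ 46 * h0 ^ 3 * h2) + ((5460) * α ^ 46 * h0 ^ 2 * h1 ^ 2 + (218736) * α ^ 46 * h0 ^ 2 * h1 * h2)) + (((24) * α ^ 46 * h0 ^ 2 * h2 ^ 2 + (72912) * α ^ 46 * h0 * h1 ^ 3) + ((48) * α ^ 46 * h0 * h1 ^ 2 * h2 + (140) * α ^ 46 * h0 * h2 ^ 3))) + ((((4) * α ^ 46 * h1 ^ 4 + (210) * α ^ 46 * h1 ^ 2 * h2 ^ 2) + ((56) * α ^ 46 * h1 * h2 ^ 3 + (-1) * α ^ 46 * h2)) + (((4004) * α ^ 45 * h0 ^ 4 + (8736) * α ^ 45 * h0 ^ 3 * h1) + ((7134466) * α ^ 45 * h0 ^ 3 * h2 + (10701699) * α ^ 45 * h0 ^ 2 * h1 ^ 2)))) + (((((24) * α ^ 45 * h0 ^ 2 * h2 ^ 2 + (48) * α ^ 45 * h0 * h1 ^ 2 * h2) + ((336) * α ^ 45 * h0 * h1 * h2 ^ 2 + (4) * α ^ 45 * h1 ^ 4)) + (((112) * α ^ 45 * h1 ^ 3 *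 h2 + (56) * α ^ 45 * h1 * h2 ^ 3) + ((31) * α ^ 45 * h2 + (-1) * α ^ 44 * h0 ^ 4))) + ((((150061080) * α ^ 44 * h0 ^ 3 * h1 + (6) * α ^ 44 * h0 ^ 2 * h1 * h2) + ((3) * α ^ 44 * h0 ^ 2 * h2 ^ 2 + (2) * α ^ 44 * h0 * h1 ^ 3)) + (((6) * α ^ 44 * h0 * h1 ^ 2 * h2 + (336) * α ^ 44 * h0 * h1 * h2 ^ 2) + ((112) * α ^ 44 * h0 * h2 ^ 3 + (112) * α ^ 44 * h1 ^ 3 * h2)))))) + (((((((168) * α ^ 44 * h1 ^ 2 * h2 ^ 2 + (-1) * α ^ 44 * h2) + ((238199319) * α ^ 43 * h0 ^ 4 + (25740) * α ^ 43 * h0 ^ 3 * h1)) + (((1120) * α ^ 43 * h0 ^ 3 * h2 + (1680) * α ^ 43 * h0 ^ 2 * h1 ^ 2) + ((29958) * α ^ 43 * h0 ^ 2 * h1 * h2 + (84) * α ^ 43 * h0 ^ 2 * h2 ^ 2))) + ((((9986) * α ^ 43 * h0 * h1 ^ 3 + (168) * α ^ 43 * h0 * h1 ^ 2 * h2) + ((112)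 * α ^ 43 * h0 * h2 ^ 3 + (13) * α ^ 43 * h1 ^ 4)) + (((168) * α ^ 43 * h1 ^ 2 * h2 ^ 2 + (16) * α ^ 43 * h1 * h2 ^ 3) + (α ^ 43 * h2 + (5719) * α ^ 42 * h0 ^ 4)))) + (((((3640) * α ^ 42 * h0 ^ 3 * h1 + (1884304) * α ^ 42 * h0 ^ 3 * h2) + ((2826456) * α ^ 42 * h0 ^ 2 * h1 ^ 2 + (84) * α ^ 42 * h0 ^ 2 * h2 ^ 2)) + (((168) * α ^ 42 * h0 * h1 ^ 2 * h2 + (420) * α ^ 42 * h0 * h1 * h2 ^ 2) + ((14) * α ^ 42 * h1 ^ 4 + (140) * α ^ 42 * h1 ^ 3 * h2))) + ((((16) * α ^ 42 * h1 * h2 ^ 3 + (48) * α ^ 42 * h2) + ((-1) * α ^ 41 * h0 ^ 4 + (62829312) * α ^ 41 * h0 ^ 3 * h1)) + (((48) * α ^ 41 * h0 ^ 2 * h1 * h2 + (16) * α ^ 41 * h0 * h1 ^ 3) + ((420) * α ^ 41 * h0 * h1 * h2 ^ 2 + (56) * α ^ 41 * h0 * h2 ^ 3))))) + ((((((140) *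 α ^ 41 * h1 ^ 3 * h2 + (84) * α ^ 41 * h1 ^ 2 * h2 ^ 2) + ((3) * α ^ 41 * h1 + (-1) * α ^ 41 * h2)) + (((145153449) * α ^ 40 * h0 ^ 4 + (22880) * α ^ 40 * h0 ^ 3 * h1) + ((240) * α ^ 40 * h0 ^ 3 * h2 + (360) * α ^ 40 * h0 ^ 2 * h1 ^ 2))) + ((((3030) * α ^ 40 * h0 ^ 2 * h1 * h2 + (168) * α ^ 40 * h0 ^ 2 * h2 ^ 2) + ((1010) * α ^ 40 * h0 * h1 ^ 3 + (336) * α ^ 40 * h0 * h1 ^ 2 * h2)) + (((56) * α ^ 40 * h0 * h2 ^ 3 + (27) * α ^ 40 * h1 ^ 4) + ((84) * α ^ 40 * h1 ^ 2 * h2 ^ 2 + (2) * α ^ 40 * h1 * h2 ^ 3)))) + (((((-1) * α ^ 40 * h1 + (3) * α ^ 40 * h2) + ((6434) * α ^ 39 * h0 ^ 4 + (1120) * α ^ 39 * h0 ^ 3 * h1)) + (((412674) * α ^ 39 * h0 ^ 3 * h2 + (619011) * α ^ 39 * h0 ^ 2 * h1 ^ 2) + ((168) * α ^ 39 * h0 ^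 2 * h2 ^ 2 + (336) * α ^ 39 * h0 * h1 ^ 2 * h2))) + ((((336) * α ^ 39 * h0 * h1 * h2 ^ 2 + (27) * α ^ 39 * h1 ^ 4) + ((112) * α ^ 39 * h1 ^ 3 * h2 + (2) * α ^ 39 * h1 * h2 ^ 3)) + ((α ^ 39 * h1 + (56) * α ^ 39 * h2) + ((-1) * α ^ 38 * h0 ^ 4 + (22848984) * α ^ 38 * h0 ^ 3 * h1)))))))))) + ((((((((((2) * α ^ 38 * h0 ^ 3 * h2 + (3) * α ^ 38 * h0 ^ 2 * h1 ^ 2) + ((168) * α ^ 38 * h0 ^ 2 * h1 * h2 + (56) * α ^ 38 * h0 * h1 ^ 3)) + (((336) * α ^ 38 * h0 * h1 * h2 ^ 2 + (16) * α ^ 38 * h0 * h2 ^ 3) + ((112) * α ^ 38 * h1 ^ 3 * h2 + (24) * α ^ 38 * h1 ^ 2 * h2 ^ 2))) + ((((13) * α ^ 38 * h1 + (-1) * α ^ 38 * h2) + ((78538823) * α ^ 37 * h0 ^ 4 + (16016) * α ^ 37 * h0 ^ 3 * h1)) + (((32) * α ^ 37 * h0 ^ 3 * h2 + (48) * α ^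 37 * h0 ^ 2 * h1 ^ 2) + ((360) * α ^ 37 * h0 ^ 2 * h1 * h2 + (210) * α ^ 37 * h0 ^ 2 * h2 ^ 2)))) + (((((120) * α ^ 37 * h0 * h1 ^ 3 + (420) * α ^ 37 * h0 * h1 ^ 2 * h2) + ((16) * α ^ 37 * h0 * h2 ^ 3 + (34) * α ^ 37 * h1 ^ 4)) + (((24) * α ^ 37 * h1 ^ 2 * h2 ^ 2 + (-1) * α ^ 37 * h1) + (α ^ 37 * h2 + (5719) * α ^ 36 * h0 ^ 4))) + ((((240) * α ^ 36 * h0 ^ 3 * h1 + (72928) * α ^ 36 * h0 ^ 3 * h2) + ((109392) * α ^ 36 * h0 ^ 2 * h1 ^ 2 + (210) * α ^ 36 * h0 ^ 2 * h2 ^ 2)) + (((420) * α ^ 36 * h0 * h1 ^ 2 * h2 + (168) * α ^ 36 * h0 * h1 * h2 ^ 2) + ((34) * α ^ 36 * h1 ^ 4 + (56) * α ^ 36 * h1 ^ 3 * h2))))) + ((((((2) * α ^ 36 * h1 + (49) * α ^ 36 * h2) + ((-1) * α ^ 35 * h0 ^ 4 + (7134464) * α ^ 35 * h0 ^ 3 *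 h1)) + (((16) * α ^ 35 * h0 ^ 3 * h2 + (24) * α ^ 35 * h0 ^ 2 * h1 ^ 2) + ((336) * α ^ 35 * h0 ^ 2 * h1 * h2 + (112) * α ^ 35 * h0 * h1 ^ 3))) + ((((168) * α ^ 35 * h0 * h1 * h2 ^ 2 + (2) * α ^ 35 * h0 * h2 ^ 3) + ((-1) * α ^ 35 * h1 ^ 4 + (56) * α ^ 35 * h1 ^ 3 * h2)) + (((3) * α ^ 35 * h1 ^ 2 * h2 ^ 2 + (31) * α ^ 35 * h1) + ((-1) * α ^ 35 * h2 + (37519274) * α ^ 34 * h0 ^ 4)))) + (((((8738) * α ^ 34 * h0 ^ 3 * h1 + (2) * α ^ 34 * h0 ^ 3 * h2) + ((3) * α ^ 34 * h0 ^ 2 * h1 ^ 2 + (342) * α ^ 34 * h0 ^ 2 * h1 * h2)) + (((168) * α ^ 34 * h0 ^ 2 * h2 ^ 2 + (114) * α ^ 34 * h0 * h1 ^ 3) + ((336) * α ^ 34 * h0 * h1 ^ 2 * h2 + (2) * α ^ 34 * h0 * h2 ^ 3))) + ((((27) * α ^ 34 * h1 ^ 4 + (3) * α ^ 34 * h1 ^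 2 * h2 ^ 2) + ((-1) * α ^ 34 * h1 + (-1) * α ^ 34 * h2)) + (((4004) * α ^ 33 * h0 ^ 4 + (34) * α ^ 33 * h0 ^ 3 * h1) + ((10040) * α ^ 33 * h0 ^ 3 * h2 + (15060) * α ^ 33 * h0 ^ 2 * h1 ^ 2)))))) + (((((((168) * α ^ 33 * h0 ^ 2 * h2 ^ 2 + (336) * α ^ 33 * h0 * h1 ^ 2 * h2) + ((48) * α ^ 33 * h0 * h1 * h2 ^ 2 + (27) * α ^ 33 * h1 ^ 4)) + (((16) * α ^ 33 * h1 ^ 3 * h2 + (2) * α ^ 33 * h1) + ((31) * α ^ 33 * h2 + (-1) * α ^ 32 * h0 ^ 4))) + ((((1884304) * α ^ 32 * h0 ^ 3 * h1 + (56) * α ^ 32 * h0 ^ 3 * h2) + ((84) * α ^ 32 * h0 ^ 2 * h1 ^ 2 + (420) * α ^ 32 * h0 ^ 2 * h1 * h2)) + (((140) * α ^ 32 * h0 * h1 ^ 3 + (48) * α ^ 32 * h0 * h1 * h2 ^ 2) + ((-1) * α ^ 32 * h1 ^ 4 + (16) * α ^ 32 * h1 ^ 3 * h2)))) + (((((49)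 * α ^ 32 * h1 + (-1) * α ^ 32 * h2) + ((15713047) * α ^ 31 * h0 ^ 4 + (3656) * α ^ 31 * h0 ^ 3 * h1)) + (((420) * α ^ 31 * h0 ^ 2 * h1 * h2 + (84) * α ^ 31 * h0 ^ 2 * h2 ^ 2) + ((140) * α ^ 31 * h0 * h1 ^ 3 + (168) * α ^ 31 * h0 * h1 ^ 2 * h2))) + ((((3) * α ^ 31 * h0 + (13) * α ^ 31 * h1 ^ 4) + ((-1) * α ^ 31 * h2 + (2184) * α ^ 30 * h0 ^ 4)) + (((18) * α ^ 30 * h0 ^ 3 * h1 + (1106) * α ^ 30 * h0 ^ 3 * h2) + ((1659) * α ^ 30 * h0 ^ 2 * h1 ^ 2 + (84) * α ^ 30 * h0 ^ 2 * h2 ^ 2))))) + ((((((168) * α ^ 30 * h0 * h1 ^ 2 * h2 + (6) * α ^ 30 * h0 * h1 * h2 ^ 2) + ((-1) * α ^ 30 * h0 + (13) * α ^ 30 * h1 ^ 4)) + (((2) * α ^ 30 * h1 ^ 3 * h2 + (13) * α ^ 30 * h2) + ((412672) * α ^ 29 * h0 ^ 3 * h1 + (112) * α ^ 29 * h0 ^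 3 * h2))) + ((((168) * α ^ 29 * h0 ^ 2 * h1 ^ 2 + (336) * α ^ 29 * h0 ^ 2 * h1 * h2) + ((112) * α ^ 29 * h0 * h1 ^ 3 + (6) * α ^ 29 * h0 * h1 * h2 ^ 2)) + (((-1) * α ^ 29 * h1 ^ 4 + (2) * α ^ 29 * h1 ^ 3 * h2) + ((56) * α ^ 29 * h1 + (-1) * α ^ 29 * h2)))) + (((((5718680) * α ^ 28 * h0 ^ 4 + (1176) * α ^ 28 * h0 ^ 3 * h1) + ((336) * α ^ 28 * h0 ^ 2 * h1 * h2 + (24) * α ^ 28 * h0 ^ 2 * h2 ^ 2)) + (((112) * α ^ 28 * h0 * h1 ^ 3 + (48) * α ^ 28 * h0 * h1 ^ 2 * h2) + ((14) * α ^ 28 * h0 + (3) * α ^ 28 * h1 ^ 4))) + ((((2) * α ^ 28 * h1 + (-1) * α ^ 28 * h2) + ((909) * α ^ 27 * h0 ^ 4 + (56) * α ^ 27 * h0 ^ 3 * h1)) + (((204) * α ^ 27 * h0 ^ 3 * h2 + (306) * α ^ 27 * h0 ^ 2 * h1 ^ 2) + ((24) * α ^ 27 * h0 ^ 2 * h2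 ^ 2 + (48) * α ^ 27 * h0 * h1 ^ 2 * h2))))))) + ((((((((-1) * α ^ 27 * h0 + (4) * α ^ 27 * h1 ^ 4) + ((3) * α ^ 27 * h2 + (4) * α ^ 26 * h0 ^ 4)) + (((72912) * α ^ 26 * h0 ^ 3 * h1 + (140) * α ^ 26 * h0 ^ 3 * h2) + ((210) * α ^ 26 * h0 ^ 2 * h1 ^ 2 + (168) * α ^ 26 * h0 ^ 2 * h1 * h2))) + ((((56) * α ^ 26 * h0 * h1 ^ 3 + (-1) * α ^ 26 * h0) + ((49) * α ^ 26 * h1 + (-1) * α ^ 26 * h2)) + (((1789339) * α ^ 25 * h0 ^ 4 + (352) * α ^ 25 * h0 ^ 3 * h1) + ((168) * α ^ 25 * h0 ^ 2 * h1 * h2 + (3) * α ^ 25 * h0 ^ 2 * h2 ^ 2)))) + (((((56) * α ^ 25 * h0 * h1 ^ 3 + (6) * α ^ 25 * h0 * h1 ^ 2 * h2) + ((32) * α ^ 25 * h0 + (3) * α ^ 25 * h1)) + (((-1) * α ^ 25 * h2 + (279) * α ^ 24 * h0 ^ 4) + ((112) * α ^ 24 * h0 ^ 3 * h1 + (114)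 * α ^ 24 * h0 ^ 3 * h2))) + ((((171) * α ^ 24 * h0 ^ 2 * h1 ^ 2 + (3) * α ^ 24 * h0 ^ 2 * h2 ^ 2) + ((6) * α ^ 24 * h0 * h1 ^ 2 * h2 + α ^ 24 * h0)) + (((-1) * α ^ 24 * h2 + (13) * α ^ 23 * h0 ^ 4) + ((9984) * α ^ 23 * h0 ^ 3 * h1 + (112) * α ^ 23 * h0 ^ 3 * h2))))) + ((((((168) * α ^ 23 * h0 ^ 2 * h1 ^ 2 + (48) * α ^ 23 * h0 ^ 2 * h1 * h2) + ((16) * α ^ 23 * h0 * h1 ^ 3 + (-1) * α ^ 23 * h0)) + (((32) * α ^ 23 * h1 + (-1) * α ^ 23 * h2) + ((475093) * α ^ 22 * h0 ^ 4 + (172) * α ^ 22 * h0 ^ 3 * h1))) + ((((48) * α ^ 22 * h0 ^ 2 * h1 * h2 + (16) * α ^ 22 * h0 * h1 ^ 3) + ((48) * α ^ 22 * h0 + (2) * α ^ 22 * h1)) + (((-1) * α ^ 22 * h2 + (59) * α ^ 21 * h0 ^ 4) + ((140) * α ^ 21 * h0 ^ 3 * h1 + (56) * α ^ 21 * h0 ^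 3 * h2)))) + (((((84) * α ^ 21 * h0 ^ 2 * h1 ^ 2 + (2) * α ^ 21 * h0) + ((-1) * α ^ 21 * h2 + (27) * α ^ 20 * h0 ^ 4)) + (((994) * α ^ 20 * h0 ^ 3 * h1 + (56) * α ^ 20 * h0 ^ 3 * h2) + ((84) * α ^ 20 * h0 ^ 2 * h1 ^ 2 + (6) * α ^ 20 * h0 ^ 2 * h1 * h2))) + ((((2) * α ^ 20 * h0 * h1 ^ 3 + (-1) * α ^ 20 * h0) + ((14) * α ^ 20 * h1 + (105379) * α ^ 19 * h0 ^ 4)) + (((114) * α ^ 19 * h0 ^ 3 * h1 + (6) * α ^ 19 * h0 ^ 2 * h1 * h2) + ((2) * α ^ 19 * h0 * h1 ^ 3 + (55) * α ^ 19 * h0)))))) + (((((((7) * α ^ 18 * h0 ^ 4 + (112) * α ^ 18 * h0 ^ 3 * h1) + ((16) * α ^ 18 * h0 ^ 3 * h2 + (24) * α ^ 18 * h0 ^ 2 * h1 ^ 2)) + ((α ^ 18 * h0 + (34) * α ^ 17 * h0 ^ 4) + ((64) * α ^ 17 * h0 ^ 3 * h1 + (16) * α ^ 17 * h0 ^ 3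 * h2))) + ((((24) * α ^ 17 * h0 ^ 2 * h1 ^ 2 + (-1) * α ^ 17 * h0) + ((3) * α ^ 17 * h1 + (19173) * α ^ 16 * h0 ^ 4)) + (((56) * α ^ 16 * h0 ^ 3 * h1 + (48) * α ^ 16 * h0) + ((-1) * α ^ 16 * h1 + (56) * α ^ 15 * h0 ^ 3 * h1)))) + (((((2) * α ^ 15 * h0 ^ 3 * h2 + (3) * α ^ 15 * h0 ^ 2 * h1 ^ 2) + ((28) * α ^ 14 * h0 ^ 4 + (2) * α ^ 14 * h0 ^ 3 * h1)) + (((2) * α ^ 14 * h0 ^ 3 * h2 + (3) * α ^ 14 * h0 ^ 2 * h1 ^ 2) + ((-1) * α ^ 14 * h2 + (2806) * α ^ 13 * h0 ^ 4))) + ((((16) * α ^ 13 * h0 ^ 3 * h1 + (33) * α ^ 13 * h0) + ((-1) * α ^ 13 * h2 + (-1) * α ^ 12 * h0 ^ 4)) + (((16) * α ^ 12 * h0 ^ 3 * h1 + (-1) * α ^ 12 * h0) + ((13) * α ^ 11 * h0 ^ 4 + (-1) * α ^ 11 * h2))))) + ((((((325) * α ^ 10 * h0 ^ 4 + (2) *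 α ^ 10 * h0 ^ 3 * h1) + ((17) * α ^ 10 * h0 + (-1) * α ^ 10 * h2)) + (((-1) * α ^ 9 * h0 ^ 4 + (2) * α ^ 9 * h0 ^ 3 * h1) + ((-1) * α ^ 9 * h0 + (-1) * α ^ 9 * h2))) + ((((3) * α ^ 8 * h0 ^ 4 + (-1) * α ^ 8 * h1) + ((-1) * α ^ 8 * h2 + (29) * α ^ 7 * h0 ^ 4)) + (((6) * α ^ 7 * h0 + (-1) * α ^ 7 * h1) + ((-1) * α ^ 7 * h2 + (-1) * α ^ 6 * h0 ^ 4)))) + (((((-1) * α ^ 6 * h0 + (-1) * α ^ 6 * h1) + ((-1) * α ^ 6 * h2 + (-1) * α ^ 5 * h1)) + (((-1) * α ^ 5 * h2 + (2) * α ^ 4 * h0 ^ 4) + (α ^ 4 * h0 + (-1) * α ^ 4 * h1))) + ((((-1) * α ^ 4 * h2 + (-1) * α ^ 3 * h0) + ((-1) * α ^ 3 * h1 + (-1) * α ^ 3 * h2)) + (((-1) * α ^ 2 * h0 + (-1) * α ^ 2 * h1) + ((-1) * α ^ 2 * h2 + (-1) * α * h0)))))))) + ((-1) * α * h1 + (-1)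 * h0)))) * hchar
end

section
/- Let F_q be a finite field with q ≥ L + T elements, α_1, ..., α_{L+T} distinct elements of F_q, and A_1, ..., A_L ∈ F_q fixed. Let R_1, ..., R_T be independent uniformly random elements of F_q, and let f be the unique polynomial of degree < L+T with f(α_i) = A_i for i ≤ L and f(α_{L+j}) = R_j for j ≤ T. Then for any T distinct points β_1, ..., β_T ∈ F_q \ {α_1, ..., α_{L+T}}, the random vector (f(β_1), ..., f(β_T)) is uniformly distributed on F_q^T, independently of (A_1, ..., A_L). -/
theorem stmt_15 (F : Type*) [Field F] [Fintype F] (L T : ℕ)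
    (hcard : L + T ≤ Fintype.card F)
    (α : Fin (L + T) → F) (hα : Function.Injective α)
    (β : Fin T → F) (hβ : Function.Injective β)
    (hout : ∀ j, β j ∉ Set.range α) (A : Fin L → F) :
    Function.Bijective (fun R : Fin T → F => fun j : Fin T =>
      (Lagrange.interpolate Finset.univ α (Fin.append A R)).eval (β j)) := by
  rw [Fintype.bijective_iff_injective_and_card]
  refine ⟨?_, rfl⟩
  intro R R' h
  -- the two interpolating polynomials
  set p := Lagrange.interpolate Finset.univ α (Fin.append A R) with hp
  set p' := Lagrange.interpolate Finset.univ α (Fin.append A R') with hp'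
  have hαinj : Set.InjOn α (Finset.univ : Finset (Fin (L + T))) := hα.injOn
  -- combined node set
  set γ : Fin (L + T) → F := Fin.append (fun i : Fin L => α (Fin.castAdd T i)) β with hγ
  have hsplit : ∀ i : Fin (L + T),
      (∃ i', i = Fin.castAdd T i') ∨ (∃ j', i = Fin.natAdd L j') := fun i =>
    Fin.addCases (fun i' => Or.inl ⟨i', rfl⟩) (fun j' => Or.inr ⟨j', rfl⟩) i
  have hγinj : Function.Injective γ := by
    intro x y hxy
    rcases hsplit x with ⟨x', rfl⟩ | ⟨x', rfl⟩ <;>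
      rcases hsplit y with ⟨y', rfl⟩ | ⟨y', rfl⟩ <;>
      simp only [hγ, Fin.append_left, Fin.append_right] at hxy
    · exact hα hxy
    · exact absurd ⟨_, hxy⟩ (hout y')
    · exact absurd ⟨_, hxy.symm⟩ (hout x')
    · exact congrArg (Fin.natAdd L) (hβ hxy)
  have hcardu : (Finset.univ : Finset (Fin (L + T))).card = L + T := by simp
  have hpp' : p = p' := by
    refine Polynomial.eq_of_degrees_lt_of_eval_index_eq (v := γ) Finset.univ hγinj.injOn ?_ ?_ ?_
    · rw [hcardu]; exact lt_of_lt_of_le (Lagrange.degree_interpolate_lt _ hαinj)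
        (by rw [hcardu])
    · rw [hcardu]; exact lt_of_lt_of_le (Lagrange.degree_interpolate_lt _ hαinj)
        (by rw [hcardu])
    · intro i _
      rcases hsplit i with ⟨i', rfl⟩ | ⟨j', rfl⟩
      · have e1 : p.eval (α (Fin.castAdd T i')) = Fin.append A R (Fin.castAdd T i') :=
          Lagrange.eval_interpolate_at_node _ hαinj (Finset.mem_univ _)
        have e2 : p'.eval (α (Fin.castAdd T i')) = Fin.append A R' (Fin.castAdd T i') :=
          Lagrange.eval_interpolate_at_node _ hαinj (Finset.mem_univ _)
        simp only [hγ, Fin.append_left] at *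
        rw [e1, e2]
      · have := congrFun h j'
        simp only [hγ, Fin.append_right]; exact this
  funext j
  have e1 : p.eval (α (Fin.natAdd L j)) = Fin.append A R (Fin.natAdd L j) :=
    Lagrange.eval_interpolate_at_node _ hαinj (Finset.mem_univ _)
  have e2 : p'.eval (α (Fin.natAdd L j)) = Fin.append A R' (Fin.natAdd L j) :=
    Lagrange.eval_interpolate_at_node _ hαinj (Finset.mem_univ _)
  rw [Fin.append_right] at e1 e2
  rw [← e1, ← e2, hpp']
end
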